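/- arXiv:1711.07032 — 2 statements merged into one kernel-verified Lean document; each statement's English description precedes it below -/
import Mathlib

section
/- Assume the distributional Sturm–Liouville equation with separated boundary conditions has eigenvalues λ₀ < λ₁ < ⋯ with λₙ(S_{α,β}) strictly increasing in β, and the Dirichlet eigenvalues satisfy: the eigenfunction of λₙᴰ has exactly n zeros in (a,b). If λ is any eigenvalue of a separated condition S_{α,β} with λ > λₙᴰ, then its eigenfunction has at least n+1 zeros in (a,b). Consequently λₙ(S_{α,β}) ≤ λₙᴰ for all (α,β). -/
open MeasureTheory intervalIntegral Set Real

/-- A (Carathéodory) solution of the distributional Sturm–Liouville equation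
`−(y¹)′ + s·y¹ + q·y = λ·r·y` on `[a,b]`, written as a first-order system for
`y` and the quasi-derivative `y1 = p(y′+sy)` in integral form. -/
def SLSolution (a b lam : ℝ) (p q r s : ℝ → ℝ) (y y1 : ℝ → ℝ) : Prop :=
  ContinuousOn y (Set.Icc a b) ∧ ContinuousOn y1 (Set.Icc a b) ∧
  ∀ x ∈ Set.Icc a b,
    y x = y a + ∫ t in a..x, (1 / p t * y1 t - s t * y t) ∧
    y1 x = y1 a + ∫ t in a..x, (s t * y1 t + (q t - lam * r t) * y t)


private lemma ae_ne_pt (μ : Measure ℝ) [NullSingletonClass μ] (t : ℝ) : ∀ᵐ s ∂μ, s ≠ t := by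
  refine ae_iff.2 ?_
  simpa [not_not, Set.setOf_eq_eq_singleton] using measure_singleton (μ := μ) t

private lemma parts_aux {f g : ℝ → ℝ} {c d : ℝ}
    (hf : IntegrableOn f (Ioc c d)) (hg : IntegrableOn g (Ioc c d)) :
    (∫ t in Ioc c d, (∫ s in Ioc c t, f s) * g t)
      + (∫ s in Ioc c d, f s * ∫ t in Ioc c s, g t)
      = (∫ s in Ioc c d, f s) * ∫ t in Ioc c d, g t := by
  set μ := volume.restrict (Ioc c d) with hμdef
  have hbase : Integrable (fun z : ℝ × ℝ => f z.1 * g z.2) (μ.prod μ) := hf.mul_prod hg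
  have hbase2 : Integrable (fun z : ℝ × ℝ => f z.2 * g z.1) (μ.prod μ) := by
    have := hg.mul_prod hf
    simpa [mul_comm] using this
  have hmeas : MeasurableSet {z : ℝ × ℝ | z.2 ≤ z.1} :=
    measurableSet_le measurable_snd measurable_fst
  have h1 : Integrable (Function.uncurry fun t s => if s ≤ t then f s * g t else 0)
      (μ.prod μ) := by
    have he : (Function.uncurry fun t s => if s ≤ t then f s * g t else 0)
        = {z : ℝ × ℝ | z.2 ≤ z.1}.indicator (fun z => f z.2 * g z.1) := by
      ext z; simp [Function.uncurry, Set.indicator_apply]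
    rw [he]; exact hbase2.indicator hmeas
  have h2 : Integrable (Function.uncurry fun s t => if t ≤ s then f s * g t else 0)
      (μ.prod μ) := by
    have he : (Function.uncurry fun s t => if t ≤ s then f s * g t else 0)
        = {z : ℝ × ℝ | z.2 ≤ z.1}.indicator (fun z => f z.1 * g z.2) := by
      ext z; simp [Function.uncurry, Set.indicator_apply]
    rw [he]; exact hbase.indicator hmeas
  have keyA : ∀ t ∈ Ioc c d, (∫ s in Ioc c t, f s) * g t
      = ∫ s, (if s ≤ t then f s * g t else 0) ∂μ := by
    intro t ht
    have h0 : ∫ s in Ioc c t, f s = ∫ s, (Iic t).indicator f s ∂μ := by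
      rw [hμdef, setIntegral_indicator measurableSet_Iic, Set.Ioc_inter_Iic,
        min_eq_right ht.2]
    rw [h0, ← MeasureTheory.integral_mul_const]
    congr 1; ext s
    by_cases h : s ≤ t <;> simp [Set.indicator_apply, h]
  have keyB : ∀ x ∈ Ioc c d, f x * (∫ t in Ioc c x, g t)
      = ∫ t, (if t ≤ x then f x * g t else 0) ∂μ := by
    intro x hx
    have h0 : ∫ t in Ioc c x, g t = ∫ t, (Iic x).indicator g t ∂μ := by
      rw [hμdef, setIntegral_indicator measurableSet_Iic, Set.Ioc_inter_Iic,
        min_eq_right hx.2]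
    rw [h0, ← MeasureTheory.integral_const_mul]
    congr 1; ext t
    by_cases h : t ≤ x <;> simp [Set.indicator_apply, h]
  calc (∫ t in Ioc c d, (∫ s in Ioc c t, f s) * g t)
        + (∫ s in Ioc c d, f s * ∫ t in Ioc c s, g t)
      = (∫ t, ∫ s, (if s ≤ t then f s * g t else 0) ∂μ ∂μ)
        + ∫ x, ∫ t, (if t ≤ x then f x * g t else 0) ∂μ ∂μ := by
        rw [hμdef] at *
        rw [setIntegral_congr_fun measurableSet_Ioc keyA,
          setIntegral_congr_fun measurableSet_Ioc keyB]
    _ = (∫ t, ∫ s, (if s ≤ t then f s * g t else 0) ∂μ ∂μ)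
        + ∫ t, ∫ s, (if t ≤ s then f s * g t else 0) ∂μ ∂μ := by
        rw [integral_integral_swap h2]
    _ = ∫ t, ((∫ s, (if s ≤ t then f s * g t else 0) ∂μ)
        + ∫ s, (if t ≤ s then f s * g t else 0) ∂μ) ∂μ := by
        have h3 := integral_add h1.integral_prod_left h2.integral_prod_right
        simp only [Function.uncurry_apply_pair] at h3
        rw [← h3]
    _ = ∫ t, (∫ s, f s ∂μ) * g t ∂μ := by
        refine integral_congr_ae ?_
        filter_upwards [h1.prod_right_ae, h2.prod_left_ae] with t hti1 hti2
        simp only [Function.uncurry_apply_pair] at hti1 hti2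
        rw [← integral_add hti1 hti2, ← MeasureTheory.integral_mul_const]
        refine integral_congr_ae ?_
        filter_upwards [ae_ne_pt μ t] with s hs
        rcases lt_trichotomy s t with h | h | h
        · simp [h.le, h.not_ge]
        · exact absurd h hs
        · simp [h.le, h.not_ge]
    _ = (∫ s, f s ∂μ) * ∫ t, g t ∂μ := MeasureTheory.integral_const_mul _ _

private lemma cont_of_primitive {f F : ℝ → ℝ} {c d : ℝ}
    (hf : IntegrableOn f (Ioc c d))
    (hF : ∀ x ∈ Icc c d, F x = F c + ∫ t in c..x, f t) :
    ContinuousOn F (Icc c d) := by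
  have hf' : IntegrableOn f (Icc c d) := by
    rwa [integrableOn_Icc_iff_integrableOn_Ioc]
  have h1 : ContinuousOn (fun x => F c + ∫ t in Ioc c x, f t) (Icc c d) :=
    continuousOn_const.add (continuousOn_primitive hf')
  refine ContinuousOn.congr h1 ?_
  intro x hx
  rw [hF x hx, intervalIntegral.integral_of_le hx.1]

private lemma bdd_mul_int {F g : ℝ → ℝ} {c d : ℝ}
    (hg : IntegrableOn g (Ioc c d)) (hF : ContinuousOn F (Icc c d)) :
    IntegrableOn (fun t => F t * g t) (Ioc c d) := by
  obtain ⟨C, hC⟩ := (isCompact_Icc (a := c) (b := d)).exists_bound_of_continuousOn hF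
  refine hg.bdd_mul (c := C) ((hF.mono Ioc_subset_Icc_self).aestronglyMeasurable measurableSet_Ioc) ?_
  exact (ae_restrict_iff' measurableSet_Ioc).2
    (ae_of_all _ fun x hx => hC x (Ioc_subset_Icc_self hx))

private lemma parts_interval {f g F G : ℝ → ℝ} {c d : ℝ} (hcd : c ≤ d)
    (hf : IntegrableOn f (Ioc c d)) (hg : IntegrableOn g (Ioc c d))
    (hF : ∀ x ∈ Icc c d, F x = F c + ∫ t in c..x, f t)
    (hG : ∀ x ∈ Icc c d, G x = G c + ∫ t in c..x, g t) :
    F d * G d - F c * G c = ∫ t in Ioc c d, (F t * g t + f t * G t) := by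
  have hFc : ContinuousOn F (Icc c d) := cont_of_primitive hf hF
  have hGc : ContinuousOn G (Icc c d) := cont_of_primitive hg hG
  have hFg : IntegrableOn (fun t => F t * g t) (Ioc c d) := bdd_mul_int hg hFc
  have hfG : IntegrableOn (fun t => f t * G t) (Ioc c d) := by
    have := bdd_mul_int hf hGc
    exact this.congr_fun (fun x _ => mul_comm _ _) measurableSet_Ioc
  have hPf : ContinuousOn (fun t => ∫ s in Ioc c t, f s) (Icc c d) :=
    continuousOn_primitive (by rwa [integrableOn_Icc_iff_integrableOn_Ioc])
  have hPg : ContinuousOn (fun t => ∫ s in Ioc c t, g s) (Icc c d) :=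
    continuousOn_primitive (by rwa [integrableOn_Icc_iff_integrableOn_Ioc])
  have hA : IntegrableOn (fun t => (∫ s in Ioc c t, f s) * g t) (Ioc c d) := bdd_mul_int hg hPf
  have hB : IntegrableOn (fun t => f t * (∫ s in Ioc c t, g s)) (Ioc c d) := by
    have := bdd_mul_int hf hPg
    exact this.congr_fun (fun x _ => mul_comm _ _) measurableSet_Ioc
  have e1 : ∫ t in Ioc c d, F t * g t
      = F c * (∫ t in Ioc c d, g t) + ∫ t in Ioc c d, (∫ s in Ioc c t, f s) * g t := by
    have : ∀ t ∈ Ioc c d, F t * g t = F c * g t + (∫ s in Ioc c t, f s) * g t := by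
      intro t ht
      rw [hF t ⟨ht.1.le, ht.2⟩, intervalIntegral.integral_of_le ht.1.le]; ring
    rw [setIntegral_congr_fun measurableSet_Ioc this,
      integral_add (hg.const_mul _) hA, MeasureTheory.integral_const_mul]
  have e2 : ∫ t in Ioc c d, f t * G t
      = G c * (∫ t in Ioc c d, f t) + ∫ t in Ioc c d, f t * (∫ s in Ioc c t, g s) := by
    have : ∀ t ∈ Ioc c d, f t * G t = f t * G c + f t * (∫ s in Ioc c t, g s) := by
      intro t ht
      rw [hG t ⟨ht.1.le, ht.2⟩, intervalIntegral.integral_of_le ht.1.le]; ring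
    rw [setIntegral_congr_fun measurableSet_Ioc this,
      integral_add (hf.mul_const _) hB]
    rw [MeasureTheory.integral_mul_const, mul_comm]
  have hFd := hF d ⟨hcd, le_rfl⟩
  have hGd := hG d ⟨hcd, le_rfl⟩
  rw [intervalIntegral.integral_of_le hcd] at hFd hGd
  rw [integral_add hFg hfG, e1, e2, hFd, hGd]
  linear_combination -parts_aux hf hg

private lemma intOn_mul2 {a b : ℝ} {w y : ℝ → ℝ} (hw : IntegrableOn w (Ioo a b))
    (hy : ContinuousOn y (Icc a b)) {c d : ℝ} (hc : c ∈ Icc a b) (hd : d ∈ Icc a b) :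
    IntegrableOn (fun t => y t * w t) (Ioc c d) ∧
      IntegrableOn (fun t => w t * y t) (Ioc c d) := by
  have h1 : IntegrableOn (fun t => y t * w t) (Ioc a b) := by
    rw [integrableOn_Ioc_iff_integrableOn_Ioo]
    obtain ⟨C, hC⟩ := (isCompact_Icc (a := a) (b := b)).exists_bound_of_continuousOn hy
    refine hw.bdd_mul (c := C)
      ((hy.mono Ioo_subset_Icc_self).aestronglyMeasurable measurableSet_Ioo) ?_
    exact (ae_restrict_iff' measurableSet_Ioo).2
      (ae_of_all _ fun x hx => hC x (Ioo_subset_Icc_self hx))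
  have h2 := h1.mono_set (Set.Ioc_subset_Ioc hc.1 hd.2)
  exact ⟨h2, h2.congr_fun (fun x _ => mul_comm _ _) measurableSet_Ioc⟩

private lemma sol_f_int {a b : ℝ} {p q r s : ℝ → ℝ}
    (hp : IntegrableOn (fun x => 1 / p x) (Ioo a b)) (hq : IntegrableOn q (Ioo a b))
    (hr : IntegrableOn r (Ioo a b)) (hs : IntegrableOn s (Ioo a b))
    {lam : ℝ} {y y1 : ℝ → ℝ} (hy : SLSolution a b lam p q r s y y1)
    {c d : ℝ} (hc : c ∈ Icc a b) (hd : d ∈ Icc a b) :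
    IntegrableOn (fun t => 1 / p t * y1 t - s t * y t) (Ioc c d) ∧
      IntegrableOn (fun t => s t * y1 t + (q t - lam * r t) * y t) (Ioc c d) := by
  obtain ⟨hyc, hy1c, _⟩ := hy
  constructor
  · exact ((intOn_mul2 hp hy1c hc hd).2).sub ((intOn_mul2 hs hyc hc hd).2)
  · exact ((intOn_mul2 hs hy1c hc hd).2).add
      ((intOn_mul2 (hq.sub (hr.const_mul lam)) hyc hc hd).2)

private lemma sol_shift {a b : ℝ} {F f : ℝ → ℝ} (hfi : IntegrableOn f (Ioc a b))
    (hF : ∀ x ∈ Icc a b, F x = F a + ∫ t in a..x, f t)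
    {c : ℝ} (hc : c ∈ Icc a b) : ∀ x ∈ Icc a b, F x = F c + ∫ t in c..x, f t := by
  intro x hx
  have hab : a ≤ b := hc.1.trans hc.2
  have hii : IntervalIntegrable f volume a b := by
    rw [intervalIntegrable_iff_integrableOn_Ioc_of_le hab]; exact hfi
  have key : ∀ u v : ℝ, u ∈ Icc a b → v ∈ Icc a b → IntervalIntegrable f volume u v := by
    intro u v hu hv
    refine hii.mono_set ?_
    exact Set.uIcc_subset_uIcc (by rwa [uIcc_of_le hab]) (by rwa [uIcc_of_le hab])
  have hadd := intervalIntegral.integral_add_adjacent_intervals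
    (key a c (left_mem_Icc.2 hab) hc) (key c x hc hx)
  rw [hF x hx, hF c hc]
  linarith [hadd]

private lemma wronskian_eq {a b : ℝ} {p q r s : ℝ → ℝ}
    (hp : IntegrableOn (fun x => 1 / p x) (Ioo a b)) (hq : IntegrableOn q (Ioo a b))
    (hr : IntegrableOn r (Ioo a b)) (hs : IntegrableOn s (Ioo a b))
    {lam mu : ℝ} {y y1 z z1 : ℝ → ℝ}
    (hy : SLSolution a b lam p q r s y y1) (hz : SLSolution a b mu p q r s z z1)
    {c d : ℝ} (hc : c ∈ Icc a b) (hd : d ∈ Icc a b) (hcd : c ≤ d) :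
    (y d * z1 d - y1 d * z d) - (y c * z1 c - y1 c * z c)
      = (lam - mu) * ∫ t in Ioc c d, r t * (y t * z t) := by
  have hab : a ≤ b := hc.1.trans hc.2
  have hamem : a ∈ Icc a b := left_mem_Icc.2 hab
  have hbmem : b ∈ Icc a b := right_mem_Icc.2 hab
  have hIcd : Icc c d ⊆ Icc a b := Icc_subset_Icc hc.1 hd.2
  obtain ⟨hfy, hgy⟩ := sol_f_int hp hq hr hs hy hc hd
  obtain ⟨hfz, hgz⟩ := sol_f_int hp hq hr hs hz hc hd
  obtain ⟨hfyab, hgyab⟩ := sol_f_int hp hq hr hs hy hamem hbmem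
  obtain ⟨hfzab, hgzab⟩ := sol_f_int hp hq hr hs hz hamem hbmem
  obtain ⟨hycont, hy1cont, hysol⟩ := hy
  obtain ⟨hzcont, hz1cont, hzsol⟩ := hz
  have hFy : ∀ x ∈ Icc c d, y x = y c + ∫ t in c..x, (1 / p t * y1 t - s t * y t) :=
    fun x hx => sol_shift hfyab (fun u hu => (hysol u hu).1) hc x (hIcd hx)
  have hFy1 : ∀ x ∈ Icc c d,
      y1 x = y1 c + ∫ t in c..x, (s t * y1 t + (q t - lam * r t) * y t) :=
    fun x hx => sol_shift hgyab (fun u hu => (hysol u hu).2) hc x (hIcd hx)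
  have hGz : ∀ x ∈ Icc c d, z x = z c + ∫ t in c..x, (1 / p t * z1 t - s t * z t) :=
    fun x hx => sol_shift hfzab (fun u hu => (hzsol u hu).1) hc x (hIcd hx)
  have hGz1 : ∀ x ∈ Icc c d,
      z1 x = z1 c + ∫ t in c..x, (s t * z1 t + (q t - mu * r t) * z t) :=
    fun x hx => sol_shift hgzab (fun u hu => (hzsol u hu).2) hc x (hIcd hx)
  have P1 := parts_interval hcd hfy hgz hFy hGz1
  have P2 := parts_interval hcd hgy hfz hFy1 hGz
  have hX : IntegrableOn (fun t => y t * (s t * z1 t + (q t - mu * r t) * z t)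
      + (1 / p t * y1 t - s t * y t) * z1 t) (Ioc c d) := by
    refine (bdd_mul_int hgz (hycont.mono hIcd)).add ?_
    exact (bdd_mul_int hfy (hz1cont.mono hIcd)).congr_fun
      (fun x _ => mul_comm _ _) measurableSet_Ioc
  have hY : IntegrableOn (fun t => y1 t * (1 / p t * z1 t - s t * z t)
      + (s t * y1 t + (q t - lam * r t) * y t) * z t) (Ioc c d) := by
    refine (bdd_mul_int hfz (hy1cont.mono hIcd)).add ?_
    exact (bdd_mul_int hgy (hzcont.mono hIcd)).congr_fun
      (fun x _ => mul_comm _ _) measurableSet_Ioc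
  have h4 : (y d * z1 d - y c * z1 c) - (y1 d * z d - y1 c * z c)
      = ∫ t in Ioc c d, ((y t * (s t * z1 t + (q t - mu * r t) * z t)
          + (1 / p t * y1 t - s t * y t) * z1 t)
        - (y1 t * (1 / p t * z1 t - s t * z t)
          + (s t * y1 t + (q t - lam * r t) * y t) * z t)) := by
    rw [integral_sub hX hY, ← P1, ← P2]
  have h5 : ∀ t ∈ Ioc c d, ((y t * (s t * z1 t + (q t - mu * r t) * z t)
          + (1 / p t * y1 t - s t * y t) * z1 t)
        - (y1 t * (1 / p t * z1 t - s t * z t)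
          + (s t * y1 t + (q t - lam * r t) * y t) * z t))
      = (lam - mu) * (r t * (y t * z t)) := fun t _ => by ring
  rw [setIntegral_congr_fun measurableSet_Ioc h5, MeasureTheory.integral_const_mul] at h4
  linarith [h4]

private lemma quasi_left {a b : ℝ} {p q r s : ℝ → ℝ}
    (hp : IntegrableOn (fun x => 1 / p x) (Ioo a b)) (hq : IntegrableOn q (Ioo a b))
    (hr : IntegrableOn r (Ioo a b)) (hs : IntegrableOn s (Ioo a b))
    (hppos : ∀ᵐ x ∂(volume.restrict (Ioo a b)), 0 < p x)
    {lam : ℝ} {y y1 : ℝ → ℝ} (hy : SLSolution a b lam p q r s y y1)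
    {c d : ℝ} (hc : c ∈ Icc a b) (hd : d ∈ Icc a b) (hcd : c < d)
    (hyc : y c = 0) (hpos : ∀ x ∈ Ioo c d, 0 < y x) : 0 ≤ y1 c := by
  by_contra hneg
  push_neg at hneg
  have hab : a ≤ b := hc.1.trans hc.2
  have hcb : c ≤ b := hc.2
  obtain ⟨hycont, hy1cont, hysol⟩ := hy
  -- primitive of |s|
  have habsIcc : IntegrableOn (fun t => |s t|) (Icc c b) :=
    (show IntegrableOn (fun t => |s t|) (Icc a b) by
      rw [integrableOn_Icc_iff_integrableOn_Ioo]; exact hs.abs).mono_set (Icc_subset_Icc hc.1 le_rfl)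
  set S : ℝ → ℝ := fun x => ∫ t in Ioc c x, |s t| with hSdef
  have hScont : ContinuousOn S (Icc c b) := continuousOn_primitive habsIcc
  have hSc : S c = 0 := by simp [hSdef]
  have hev1 : ∀ᶠ x in nhdsWithin c (Icc a b), y1 x < 0 :=
    (hy1cont c hc) (Iio_mem_nhds hneg)
  have hev2 : ∀ᶠ x in nhdsWithin c (Icc c b), S x < 1/2 :=
    (hScont c (left_mem_Icc.2 hcb)) (Iio_mem_nhds (by rw [hSc]; norm_num))
  obtain ⟨ε1, hε1, P1'⟩ := Metric.mem_nhdsWithin_iff.1 hev1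
  obtain ⟨ε2, hε2, P2'⟩ := Metric.mem_nhdsWithin_iff.1 hev2
  have P1 : ∀ x ∈ Icc a b, dist x c < ε1 → y1 x < 0 :=
    fun x hx hdx => P1' ⟨Metric.mem_ball.2 hdx, hx⟩
  have P2 : ∀ x ∈ Icc c b, dist x c < ε2 → S x < 1/2 :=
    fun x hx hdx => P2' ⟨Metric.mem_ball.2 hdx, hx⟩
  set ε := min ε1 ε2 with hεdef
  have hε : 0 < ε := lt_min hε1 hε2
  set xb := min ((c+d)/2) (c + ε/2) with hxbdef
  have hcxb : c < xb := lt_min (by linarith) (by linarith)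
  have hxbd : xb < d := (min_le_left _ _).trans_lt (by linarith)
  have hxbb : xb ≤ b := hxbd.le.trans hd.2
  have hsub : Icc c xb ⊆ Icc a b := Icc_subset_Icc hc.1 hxbb
  have hdist : ∀ x ∈ Icc c xb, dist x c < ε := by
    intro x hx
    rw [Real.dist_eq, abs_of_nonneg (by linarith [hx.1])]
    have : x ≤ c + ε/2 := hx.2.trans (min_le_right _ _)
    linarith
  have hy1neg : ∀ x ∈ Icc c xb, y1 x < 0 := fun x hx =>
    P1 x (hsub hx) ((hdist x hx).trans_le (min_le_left _ _))
  have hSxb : S xb < 1/2 :=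
    P2 xb ⟨hcxb.le, hxbb⟩ ((hdist xb ⟨hcxb.le, le_rfl⟩).trans_le (min_le_right _ _))
  have hynn : ∀ x ∈ Icc c xb, 0 ≤ y x := by
    intro x hx
    rcases eq_or_lt_of_le hx.1 with h | h
    · rw [← h, hyc]
    · exact (hpos x ⟨h, hx.2.trans_lt hxbd⟩).le
  obtain ⟨ts, htsmem, htsmax⟩ := (isCompact_Icc (a := c) (b := xb)).exists_isMaxOn
    ⟨c, left_mem_Icc.2 hcxb.le⟩ (hycont.mono hsub)
  set M := y ts with hMdef
  have hyleM : ∀ x ∈ Icc c xb, y x ≤ M := htsmax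
  have hMpos : 0 < M := by
    have hmid : (c + xb)/2 ∈ Icc c xb := ⟨by linarith, by linarith⟩
    exact lt_of_lt_of_le (hpos _ ⟨by linarith [hcxb], by nlinarith [hmid.2, hxbd]⟩)
      (hyleM _ hmid)
  have hcts : c < ts := by
    rcases eq_or_lt_of_le htsmem.1 with h | h
    · exfalso; rw [hMdef, ← h, hyc] at hMpos; exact lt_irrefl 0 hMpos
    · exact h
  have htsab : ts ∈ Icc a b := hsub htsmem
  -- the integral formula
  have hfyab := (sol_f_int hp hq hr hs ⟨hycont, hy1cont, hysol⟩ (left_mem_Icc.2 hab)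
    (right_mem_Icc.2 hab)).1
  have hform : y ts = y c + ∫ t in c..ts, (1 / p t * y1 t - s t * y t) :=
    sol_shift hfyab (fun u hu => (hysol u hu).1) hc ts htsab
  rw [hyc, zero_add] at hform
  -- integrability on [c, ts]
  have hI1 : IntervalIntegrable (fun t => 1 / p t * y1 t - s t * y t) volume c ts := by
    rw [intervalIntegrable_iff_integrableOn_Ioc_of_le hcts.le]
    exact (sol_f_int hp hq hr hs ⟨hycont, hy1cont, hysol⟩ hc htsab).1
  have habsIoc : IntegrableOn (fun t => |s t|) (Ioc c xb) :=
    habsIcc.mono_set (Ioc_subset_Icc_self.trans (Icc_subset_Icc le_rfl hxbb))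
  have hI2 : IntervalIntegrable (fun t => |s t| * M) volume c ts := by
    rw [intervalIntegrable_iff_integrableOn_Ioc_of_le hcts.le]
    exact (habsIoc.mono_set (Ioc_subset_Ioc le_rfl htsmem.2)).mul_const _
  -- a.e. pointwise bound
  have hpae : ∀ᵐ x ∂volume.restrict (Icc c ts), 0 < p x := by
    have h1 : volume.restrict (Ioo a b) = volume.restrict (Icc a b) :=
      Measure.restrict_congr_set Ioo_ae_eq_Icc
    rw [h1] at hppos
    exact ae_restrict_of_ae_restrict_of_subset
      (Icc_subset_Icc hc.1 (htsmem.2.trans hxbb)) hppos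
  have hmono : (fun t => 1 / p t * y1 t - s t * y t)
      ≤ᵐ[volume.restrict (Icc c ts)] fun t => |s t| * M := by
    filter_upwards [hpae, ae_restrict_mem measurableSet_Icc] with x hpx hxmem
    have hxcxb : x ∈ Icc c xb := ⟨hxmem.1, hxmem.2.trans htsmem.2⟩
    have h1 : 1 / p x * y1 x ≤ 0 :=
      mul_nonpos_iff.2 (Or.inl ⟨(one_div_pos.2 hpx).le, (hy1neg x hxcxb).le⟩)
    have h2 : -(s x) * y x ≤ |s x| * y x :=
      mul_le_mul_of_nonneg_right (neg_le_abs _) (hynn x hxcxb)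
    have h3 : |s x| * y x ≤ |s x| * M :=
      mul_le_mul_of_nonneg_left (hyleM x hxcxb) (abs_nonneg _)
    have h4 : -(s x * y x) = -(s x) * y x := by ring
    show 1 / p x * y1 x - s x * y x ≤ |s x| * M
    linarith
  have hle1 : y ts ≤ ∫ t in c..ts, (|s t| * M) := by
    rw [hform]
    exact intervalIntegral.integral_mono_ae_restrict hcts.le hI1 hI2 hmono
  have hle2 : (∫ t in c..ts, (|s t| * M)) = (∫ t in c..ts, |s t|) * M := by
    rw [intervalIntegral.integral_mul_const]
  have hle3 : (∫ t in c..ts, |s t|) ≤ S xb := by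
    rw [intervalIntegral.integral_of_le hcts.le, hSdef]
    refine setIntegral_mono_set habsIoc (ae_of_all _ fun x => abs_nonneg _) ?_
    exact HasSubset.Subset.eventuallyLE (Ioc_subset_Ioc le_rfl htsmem.2)
  have : M ≤ S xb * M := by
    calc M = y ts := rfl
    _ ≤ (∫ t in c..ts, |s t|) * M := by rw [← hle2]; exact hle1
    _ ≤ S xb * M := mul_le_mul_of_nonneg_right hle3 hMpos.le
  nlinarith [hSxb, hMpos]

private lemma quasi_right {a b : ℝ} {p q r s : ℝ → ℝ}
    (hp : IntegrableOn (fun x => 1 / p x) (Ioo a b)) (hq : IntegrableOn q (Ioo a b))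
    (hr : IntegrableOn r (Ioo a b)) (hs : IntegrableOn s (Ioo a b))
    (hppos : ∀ᵐ x ∂(volume.restrict (Ioo a b)), 0 < p x)
    {lam : ℝ} {y y1 : ℝ → ℝ} (hy : SLSolution a b lam p q r s y y1)
    {c d : ℝ} (hc : c ∈ Icc a b) (hd : d ∈ Icc a b) (hcd : c < d)
    (hyd : y d = 0) (hpos : ∀ x ∈ Ioo c d, 0 < y x) : y1 d ≤ 0 := by
  by_contra hneg
  push_neg at hneg
  have hab : a ≤ b := hc.1.trans hc.2
  obtain ⟨hycont, hy1cont, hysol⟩ := hy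
  have habsIcc : IntegrableOn (fun t => |s t|) (Icc c d) :=
    (show IntegrableOn (fun t => |s t|) (Icc a b) by
      rw [integrableOn_Icc_iff_integrableOn_Ioo]; exact hs.abs).mono_set (Icc_subset_Icc hc.1 hd.2)
  set S : ℝ → ℝ := fun x => ∫ t in x..d, |s t| with hSdef
  have hScont : ContinuousOn S (Icc c d) := by
    have := continuousOn_primitive_interval_left (a := c) (b := d)
      (by rwa [uIcc_of_le hcd.le])
    rwa [uIcc_of_le hcd.le] at this
  have hSd : S d = 0 := by simp [hSdef]
  have hev1 : ∀ᶠ x in nhdsWithin d (Icc a b), 0 < y1 x :=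
    (hy1cont d hd) (Ioi_mem_nhds hneg)
  have hev2 : ∀ᶠ x in nhdsWithin d (Icc c d), S x < 1/2 :=
    (hScont d (right_mem_Icc.2 hcd.le)) (Iio_mem_nhds (by rw [hSd]; norm_num))
  obtain ⟨ε1, hε1, P1'⟩ := Metric.mem_nhdsWithin_iff.1 hev1
  obtain ⟨ε2, hε2, P2'⟩ := Metric.mem_nhdsWithin_iff.1 hev2
  have P1 : ∀ x ∈ Icc a b, dist x d < ε1 → 0 < y1 x :=
    fun x hx hdx => P1' ⟨Metric.mem_ball.2 hdx, hx⟩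
  have P2 : ∀ x ∈ Icc c d, dist x d < ε2 → S x < 1/2 :=
    fun x hx hdx => P2' ⟨Metric.mem_ball.2 hdx, hx⟩
  set ε := min ε1 ε2 with hεdef
  have hε : 0 < ε := lt_min hε1 hε2
  set xb := max ((c+d)/2) (d - ε/2) with hxbdef
  have hcxb : c < xb := lt_of_lt_of_le (by linarith) (le_max_left _ _)
  have hxbd : xb < d := max_lt (by linarith) (by linarith)
  have hxba : a ≤ xb := hc.1.trans hcxb.le
  have hsub : Icc xb d ⊆ Icc a b := Icc_subset_Icc hxba hd.2
  have hdist : ∀ x ∈ Icc xb d, dist x d < ε := by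
    intro x hx
    rw [Real.dist_eq, abs_of_nonpos (by linarith [hx.2])]
    have : d - ε/2 ≤ x := (le_max_right _ _).trans hx.1
    linarith
  have hy1pos : ∀ x ∈ Icc xb d, 0 < y1 x := fun x hx =>
    P1 x (hsub hx) ((hdist x hx).trans_le (min_le_left _ _))
  have hSxb : S xb < 1/2 :=
    P2 xb ⟨hcxb.le, hxbd.le⟩ ((hdist xb ⟨le_rfl, hxbd.le⟩).trans_le (min_le_right _ _))
  have hynn : ∀ x ∈ Icc xb d, 0 ≤ y x := by
    intro x hx
    rcases eq_or_lt_of_le hx.2 with h | h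
    · rw [h, hyd]
    · exact (hpos x ⟨hcxb.trans_le hx.1, h⟩).le
  obtain ⟨ts, htsmem, htsmax⟩ := (isCompact_Icc (a := xb) (b := d)).exists_isMaxOn
    ⟨d, right_mem_Icc.2 hxbd.le⟩ (hycont.mono hsub)
  set M := y ts with hMdef
  have hyleM : ∀ x ∈ Icc xb d, y x ≤ M := htsmax
  have hMpos : 0 < M := by
    have hmid : (xb + d)/2 ∈ Icc xb d := ⟨by linarith, by linarith⟩
    exact lt_of_lt_of_le (hpos _ ⟨by nlinarith [hmid.1, hcxb], by linarith [hxbd]⟩)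
      (hyleM _ hmid)
  have htsd : ts < d := by
    rcases eq_or_lt_of_le htsmem.2 with h | h
    · exfalso; rw [hMdef, h, hyd] at hMpos; exact lt_irrefl 0 hMpos
    · exact h
  have htsab : ts ∈ Icc a b := hsub htsmem
  have hfyab := (sol_f_int hp hq hr hs ⟨hycont, hy1cont, hysol⟩ (left_mem_Icc.2 hab)
    (right_mem_Icc.2 hab)).1
  have hform : y d = y ts + ∫ t in ts..d, (1 / p t * y1 t - s t * y t) :=
    sol_shift hfyab (fun u hu => (hysol u hu).1) htsab d hd
  rw [hyd] at hform
  have hform2 : y ts = ∫ t in ts..d, (s t * y t - 1 / p t * y1 t) := by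
    have : (fun t => s t * y t - 1 / p t * y1 t)
        = fun t => -(1 / p t * y1 t - s t * y t) := by ext t; ring
    rw [this, intervalIntegral.integral_neg]
    linarith
  have hI1 : IntervalIntegrable (fun t => s t * y t - 1 / p t * y1 t) volume ts d := by
    rw [intervalIntegrable_iff_integrableOn_Ioc_of_le htsd.le]
    have h5 : IntegrableOn (fun t => -(1 / p t * y1 t - s t * y t)) (Ioc ts d) :=
      (sol_f_int hp hq hr hs ⟨hycont, hy1cont, hysol⟩ htsab hd).1.neg
    exact h5.congr_fun (fun x _ => by ring) measurableSet_Ioc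
  have habsIoc : IntegrableOn (fun t => |s t|) (Ioc xb d) :=
    habsIcc.mono_set (Ioc_subset_Icc_self.trans (Icc_subset_Icc hcxb.le le_rfl))
  have hI2 : IntervalIntegrable (fun t => |s t| * M) volume ts d := by
    rw [intervalIntegrable_iff_integrableOn_Ioc_of_le htsd.le]
    exact (habsIoc.mono_set (Ioc_subset_Ioc htsmem.1 le_rfl)).mul_const _
  have hpae : ∀ᵐ x ∂volume.restrict (Icc ts d), 0 < p x := by
    have h1 : volume.restrict (Ioo a b) = volume.restrict (Icc a b) :=
      Measure.restrict_congr_set Ioo_ae_eq_Icc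
    rw [h1] at hppos
    exact ae_restrict_of_ae_restrict_of_subset
      (Icc_subset_Icc (hxba.trans htsmem.1) hd.2) hppos
  have hmono : (fun t => s t * y t - 1 / p t * y1 t)
      ≤ᵐ[volume.restrict (Icc ts d)] fun t => |s t| * M := by
    filter_upwards [hpae, ae_restrict_mem measurableSet_Icc] with x hpx hxmem
    have hxcxb : x ∈ Icc xb d := ⟨htsmem.1.trans hxmem.1, hxmem.2⟩
    have h1 : 0 ≤ 1 / p x * y1 x :=
      mul_nonneg (one_div_pos.2 hpx).le (hy1pos x hxcxb).le
    have h2 : s x * y x ≤ |s x| * y x :=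
      mul_le_mul_of_nonneg_right (le_abs_self _) (hynn x hxcxb)
    have h3 : |s x| * y x ≤ |s x| * M :=
      mul_le_mul_of_nonneg_left (hyleM x hxcxb) (abs_nonneg _)
    show s x * y x - 1 / p x * y1 x ≤ |s x| * M
    linarith
  have hle1 : y ts ≤ ∫ t in ts..d, (|s t| * M) := by
    rw [hform2]
    exact intervalIntegral.integral_mono_ae_restrict htsd.le hI1 hI2 hmono
  have hle3 : (∫ t in ts..d, |s t|) ≤ S xb := by
    have hSxb' : S xb = ∫ t in Ioc xb d, |s t| := by
      rw [hSdef]; exact intervalIntegral.integral_of_le hxbd.le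
    rw [intervalIntegral.integral_of_le htsd.le, hSxb']
    refine setIntegral_mono_set habsIoc (ae_of_all _ fun x => abs_nonneg _) ?_
    exact HasSubset.Subset.eventuallyLE (Ioc_subset_Ioc htsmem.1 le_rfl)
  have : M ≤ S xb * M := by
    calc M = y ts := rfl
    _ ≤ (∫ t in ts..d, |s t|) * M := by
        rw [← intervalIntegral.integral_mul_const]; exact hle1
    _ ≤ S xb * M := mul_le_mul_of_nonneg_right hle3 hMpos.le
  nlinarith [hSxb, hMpos]

private lemma sl_neg {a b lam : ℝ} {p q r s y y1 : ℝ → ℝ}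
    (hy : SLSolution a b lam p q r s y y1) :
    SLSolution a b lam p q r s (fun x => -y x) (fun x => -y1 x) := by
  obtain ⟨h1, h2, h3⟩ := hy
  refine ⟨h1.neg, h2.neg, fun x hx => ?_⟩
  obtain ⟨e1, e2⟩ := h3 x hx
  constructor
  · show -y x = -y a + ∫ t in a..x, (1 / p t * (-y1 t) - s t * (-y t))
    have he : (fun t => 1 / p t * (-y1 t) - s t * (-y t))
        = fun t => -(1 / p t * y1 t - s t * y t) := by ext t; ring
    rw [he, intervalIntegral.integral_neg]
    linarith
  · show -y1 x = -y1 a + ∫ t in a..x, (s t * (-y1 t) + (q t - lam * r t) * (-y t))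
    have he : (fun t => s t * (-y1 t) + (q t - lam * r t) * (-y t))
        = fun t => -(s t * y1 t + (q t - lam * r t) * y t) := by ext t; ring
    rw [he, intervalIntegral.integral_neg]
    linarith

private lemma endpoint_nonneg {a b c d : ℝ} {y : ℝ → ℝ} (hy : ContinuousOn y (Icc a b))
    (hc : c ∈ Icc a b) (hd : d ∈ Icc a b) (hcd : c < d)
    (hpos : ∀ x ∈ Ioo c d, 0 < y x) : 0 ≤ y c ∧ 0 ≤ y d := by
  have hsub : Ioo c d ⊆ Icc a b := fun x hx => ⟨hc.1.trans hx.1.le, hx.2.le.trans hd.2⟩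
  have himg : y '' Ioo c d ⊆ Ici 0 := by
    rintro v ⟨x, hx, rfl⟩; exact (hpos x hx).le
  have key : ∀ e ∈ Icc a b, e ∈ closure (Ioo c d) → 0 ≤ y e := by
    intro e he hecl
    have h1 : ContinuousWithinAt y (Ioo c d) e := (hy e he).mono hsub
    have h2 : y e ∈ closure (y '' Ioo c d) := h1.mem_closure_image hecl
    exact closure_minimal himg isClosed_Ici h2
  have hcl : closure (Ioo c d) = Icc c d := closure_Ioo hcd.ne
  exact ⟨key c hc (by rw [hcl]; exact left_mem_Icc.2 hcd.le),
         key d hd (by rw [hcl]; exact right_mem_Icc.2 hcd.le)⟩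

set_option maxHeartbeats 1000000 in
private lemma sturm_core {a b : ℝ} {p q r s : ℝ → ℝ}
    (hp : IntegrableOn (fun x => 1 / p x) (Ioo a b)) (hq : IntegrableOn q (Ioo a b))
    (hr : IntegrableOn r (Ioo a b)) (hs : IntegrableOn s (Ioo a b))
    (hppos : ∀ᵐ x ∂(volume.restrict (Ioo a b)), 0 < p x)
    (hrpos : ∀ᵐ x ∂(volume.restrict (Ioo a b)), 0 < r x)
    {lam mu : ℝ} {y y1 z z1 : ℝ → ℝ}
    (hy : SLSolution a b lam p q r s y y1) (hz : SLSolution a b mu p q r s z z1)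
    (hlt : mu < lam) {c d : ℝ} (hc : c ∈ Icc a b) (hd : d ∈ Icc a b) (hcd : c < d)
    (hzc : z c = 0) (hzd : z d = 0) (hzpos : ∀ x ∈ Ioo c d, 0 < z x)
    (hypos : ∀ x ∈ Ioo c d, 0 < y x) : False := by
  have hW := wronskian_eq hp hq hr hs hy hz hc hd hcd.le
  have hz1c : 0 ≤ z1 c := quasi_left hp hq hr hs hppos hz hc hd hcd hzc hzpos
  have hz1d : z1 d ≤ 0 := quasi_right hp hq hr hs hppos hz hc hd hcd hzd hzpos
  obtain ⟨hyc0, hyd0⟩ := endpoint_nonneg hy.1 hc hd hcd hypos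
  have hint : IntegrableOn (fun t => r t * (y t * z t)) (Ioc c d) :=
    (intOn_mul2 hr (hy.1.mul hz.1) hc hd).2
  have hrae : ∀ᵐ x ∂volume.restrict (Ioc c d), 0 < r x := by
    have h1 : volume.restrict (Ioo a b) = volume.restrict (Icc a b) :=
      Measure.restrict_congr_set Ioo_ae_eq_Icc
    rw [h1] at hrpos
    exact ae_restrict_of_ae_restrict_of_subset
      (Ioc_subset_Icc_self.trans (Icc_subset_Icc hc.1 hd.2)) hrpos
  have hposae : ∀ᵐ x ∂volume.restrict (Ioc c d), 0 < r x * (y x * z x) := by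
    filter_upwards [hrae, ae_restrict_mem measurableSet_Ioc, ae_ne_pt _ d] with x h1 h2 h3
    have hxIoo : x ∈ Ioo c d := ⟨h2.1, lt_of_le_of_ne h2.2 h3⟩
    exact mul_pos h1 (mul_pos (hypos x hxIoo) (hzpos x hxIoo))
  have hIpos : 0 < ∫ t in Ioc c d, r t * (y t * z t) := by
    rcases lt_or_ge 0 (∫ t in Ioc c d, r t * (y t * z t)) with h | h
    · exact h
    · exfalso
      have hnn : (0 : ℝ → ℝ) ≤ᵐ[volume.restrict (Ioc c d)] fun t => r t * (y t * z t) := by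
        filter_upwards [hposae] with x hx
        exact hx.le
      have hge : 0 ≤ ∫ t in Ioc c d, r t * (y t * z t) := integral_nonneg_of_ae hnn
      have heq : (∫ t in Ioc c d, r t * (y t * z t)) = 0 := le_antisymm h hge
      have hint' : Integrable (fun t => r t * (y t * z t))
          (volume.restrict (Ioc c d)) := hint
      rw [MeasureTheory.integral_eq_zero_iff_of_nonneg_ae hnn hint'] at heq
      have hμne : volume.restrict (Ioc c d) ≠ 0 := by
        simp only [Ne, Measure.restrict_eq_zero, Real.volume_Ioc,
          ENNReal.ofReal_eq_zero, not_le]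
        linarith
      haveI := ae_neBot.2 hμne
      obtain ⟨x, hx0, hxpos⟩ := (heq.and hposae).exists
      simp only [Pi.zero_apply] at hx0
      exact hxpos.ne' hx0
  rw [hzc, hzd] at hW
  have h1 : 0 ≤ y c * z1 c := mul_nonneg hyc0 hz1c
  have h2 : y d * z1 d ≤ 0 := mul_nonpos_iff.2 (Or.inl ⟨hyd0, hz1d⟩)
  have h3 : 0 < (lam - mu) * ∫ t in Ioc c d, r t * (y t * z t) :=
    mul_pos (by linarith) hIpos
  nlinarith [hW]

private lemma sign_const {a b c d : ℝ} {y : ℝ → ℝ} (hy : ContinuousOn y (Icc a b))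
    (hc : c ∈ Icc a b) (hd : d ∈ Icc a b) (hcd : c < d)
    (hne : ∀ x ∈ Ioo c d, y x ≠ 0) :
    (∀ x ∈ Ioo c d, 0 < y x) ∨ (∀ x ∈ Ioo c d, y x < 0) := by
  have hsub : Ioo c d ⊆ Icc a b := fun x hx => ⟨hc.1.trans hx.1.le, hx.2.le.trans hd.2⟩
  have hmid : (c+d)/2 ∈ Ioo c d := ⟨by linarith [hcd], by linarith [hcd]⟩
  rcases lt_or_gt_of_ne (hne _ hmid) with h | h
  · right; intro x hx
    by_contra hge
    push_neg at hge
    have hx0 : 0 < y x := hge.lt_of_ne (Ne.symm (hne x hx))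
    have huIcc : uIcc x ((c+d)/2) ⊆ Ioo c d := Set.ordConnected_Ioo.uIcc_subset hx hmid
    have hcont : ContinuousOn y (uIcc x ((c+d)/2)) := hy.mono (huIcc.trans hsub)
    obtain ⟨t, ht, hyt⟩ := intermediate_value_uIcc hcont
      (Set.mem_uIcc.2 (Or.inr ⟨h.le, hx0.le⟩))
    exact hne t (huIcc ht) hyt
  · left; intro x hx
    by_contra hge
    push_neg at hge
    have hx0 : y x < 0 := hge.lt_of_ne (hne x hx)
    have huIcc : uIcc x ((c+d)/2) ⊆ Ioo c d := Set.ordConnected_Ioo.uIcc_subset hx hmid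
    have hcont : ContinuousOn y (uIcc x ((c+d)/2)) := hy.mono (huIcc.trans hsub)
    obtain ⟨t, ht, hyt⟩ := intermediate_value_uIcc hcont
      (Set.mem_uIcc.2 (Or.inl ⟨hx0.le, h.le⟩))
    exact hne t (huIcc ht) hyt

private lemma zero_in_gap {a b : ℝ} {p q r s : ℝ → ℝ}
    (hp : IntegrableOn (fun x => 1 / p x) (Ioo a b)) (hq : IntegrableOn q (Ioo a b))
    (hr : IntegrableOn r (Ioo a b)) (hs : IntegrableOn s (Ioo a b))
    (hppos : ∀ᵐ x ∂(volume.restrict (Ioo a b)), 0 < p x)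
    (hrpos : ∀ᵐ x ∂(volume.restrict (Ioo a b)), 0 < r x)
    {lam mu : ℝ} {y y1 z z1 : ℝ → ℝ}
    (hy : SLSolution a b lam p q r s y y1) (hz : SLSolution a b mu p q r s z z1)
    (hlt : mu < lam) {c d : ℝ} (hc : c ∈ Icc a b) (hd : d ∈ Icc a b) (hcd : c < d)
    (hzc : z c = 0) (hzd : z d = 0) (hzne : ∀ x ∈ Ioo c d, z x ≠ 0) :
    ∃ x ∈ Ioo c d, y x = 0 := by
  by_contra hcon
  push_neg at hcon
  have hzs := sign_const hz.1 hc hd hcd hzne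
  have hys := sign_const hy.1 hc hd hcd hcon
  have hznegc : (fun x => -z x) c = 0 := by simp [hzc]
  have hznegd : (fun x => -z x) d = 0 := by simp [hzd]
  rcases hzs with hzp | hzn <;> rcases hys with hyp | hyn
  · exact sturm_core hp hq hr hs hppos hrpos hy hz hlt hc hd hcd hzc hzd hzp hyp
  · exact sturm_core hp hq hr hs hppos hrpos (sl_neg hy) hz hlt hc hd hcd hzc hzd hzp
      (fun x hx => neg_pos.2 (hyn x hx))
  · exact sturm_core hp hq hr hs hppos hrpos hy (sl_neg hz) hlt hc hd hcd hznegc hznegd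
      (fun x hx => neg_pos.2 (hzn x hx)) hyp
  · exact sturm_core hp hq hr hs hppos hrpos (sl_neg hy) (sl_neg hz) hlt hc hd hcd
      hznegc hznegd (fun x hx => neg_pos.2 (hzn x hx)) (fun x hx => neg_pos.2 (hyn x hx))

private lemma count_zeros (a b : ℝ) (z y : ℝ → ℝ)
    (P : ∀ c d : ℝ, a ≤ c → c < d → d ≤ b → z c = 0 → z d = 0 →
      (∀ x ∈ Set.Ioo c d, z x ≠ 0) → ∃ x ∈ Set.Ioo c d, y x = 0) :
    ∀ (n : ℕ) (c : ℝ), a ≤ c → c < b → z c = 0 → z b = 0 →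
      {x ∈ Set.Ioo c b | z x = 0}.Finite →
      {x ∈ Set.Ioo c b | z x = 0}.ncard = n →
      ∃ Z : Finset ℝ, (↑Z : Set ℝ) ⊆ {x ∈ Set.Ioo c b | y x = 0} ∧ n + 1 ≤ Z.card := by
  intro n
  induction n with
  | zero =>
    intro c hac hcb hzc hzb hfin hcard
    have hemp : {x ∈ Set.Ioo c b | z x = 0} = ∅ := (Set.ncard_eq_zero hfin).1 hcard
    have hnz : ∀ x ∈ Set.Ioo c b, z x ≠ 0 := by
      intro x hx hx0
      have hmem : x ∈ ({x ∈ Set.Ioo c b | z x = 0} : Set ℝ) := ⟨hx, hx0⟩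
      rw [hemp] at hmem; exact hmem
    obtain ⟨x, hx, hyx⟩ := P c b hac hcb le_rfl hzc hzb hnz
    refine ⟨{x}, ?_, by simp⟩
    simp only [Finset.coe_singleton, Set.singleton_subset_iff]
    exact ⟨hx, hyx⟩
  | succ n ih =>
    intro c hac hcb hzc hzb hfin hcard
    have hne' : hfin.toFinset.Nonempty := by
      rw [Set.Finite.toFinset_nonempty]
      exact (Set.ncard_pos hfin).1 (by omega)
    set m := hfin.toFinset.min' hne' with hm
    have hmS : m ∈ {x ∈ Set.Ioo c b | z x = 0} := by
      rw [← Set.Finite.mem_toFinset hfin]; exact Finset.min'_mem _ _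
    have hmin : ∀ x ∈ {x ∈ Set.Ioo c b | z x = 0}, m ≤ x := fun x hx =>
      Finset.min'_le _ x ((Set.Finite.mem_toFinset hfin).2 hx)
    have hmIoo := hmS.1
    have hzm := hmS.2
    have hnogap : ∀ x ∈ Set.Ioo c m, z x ≠ 0 := by
      intro x hx hx0
      have hxS : x ∈ ({x ∈ Set.Ioo c b | z x = 0} : Set ℝ) :=
        ⟨⟨hx.1, hx.2.trans hmIoo.2⟩, hx0⟩
      exact absurd (hmin x hxS) (not_le.2 hx.2)
    obtain ⟨x0, hx0, hyx0⟩ := P c m hac hmIoo.1 hmIoo.2.le hzc hzm hnogap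
    have hseteq : {x ∈ Set.Ioo m b | z x = 0} = {x ∈ Set.Ioo c b | z x = 0} \ {m} := by
      ext x
      simp only [Set.mem_setOf_eq, Set.mem_diff, Set.mem_singleton_iff, Set.mem_Ioo]
      constructor
      · rintro ⟨⟨h1, h2⟩, h3⟩
        exact ⟨⟨⟨hmIoo.1.trans h1, h2⟩, h3⟩, h1.ne'⟩
      · rintro ⟨⟨⟨h1, h2⟩, h3⟩, h4⟩
        exact ⟨⟨lt_of_le_of_ne (hmin x ⟨⟨h1, h2⟩, h3⟩) (Ne.symm h4), h2⟩, h3⟩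
    have hfin' : {x ∈ Set.Ioo m b | z x = 0}.Finite := by
      rw [hseteq]; exact hfin.diff
    have hcard' : {x ∈ Set.Ioo m b | z x = 0}.ncard = n := by
      rw [hseteq, Set.ncard_diff_singleton_of_mem hmS, hcard]
      omega
    obtain ⟨Z', hZ'sub, hZ'card⟩ := ih m (hac.trans hmIoo.1.le) hmIoo.2 hzm hzb hfin' hcard'
    have hx0notin : x0 ∉ Z' := by
      intro hmem
      have h5 := hZ'sub hmem
      exact absurd h5.1.1 (not_lt.2 hx0.2.le)
    refine ⟨insert x0 Z', ?_, ?_⟩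
    · intro x hx
      rw [Finset.coe_insert, Set.mem_insert_iff] at hx
      rcases hx with rfl | hx
      · exact ⟨⟨hx0.1, hx0.2.trans hmIoo.2⟩, hyx0⟩
      · obtain ⟨hxm, hxy⟩ := hZ'sub hx
        exact ⟨⟨hmIoo.1.trans hxm.1, hxm.2⟩, hxy⟩
    · rw [Finset.card_insert_of_notMem hx0notin]; omega

/-- Suppose the distributional Sturm–Liouville problem has Dirichlet eigenvalues
`lamD n` whose eigenfunctions `Psi n` have exactly `n` zeros in `(a,b)`, and separated
eigenvalues `lamS α β n` (for `S_{α,β}`) forming a strictly increasing sequence,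
strictly increasing in `β`, with eigenfunctions having exactly `n` interior zeros.
Then any eigenfunction of a separated condition `S_{α,β}` whose eigenvalue exceeds
`lamD n` has at least `n+1` zeros in `(a,b)`; consequently
`lamS α β n ≤ lamD n` for all `(α,β)` and `n`. -/
theorem stmt17 (a b : ℝ) (hab : a < b) (p q r s : ℝ → ℝ)
    (hp : IntegrableOn (fun x => 1 / p x) (Set.Ioo a b))
    (hq : IntegrableOn q (Set.Ioo a b))
    (hr : IntegrableOn r (Set.Ioo a b))
    (hs : IntegrableOn s (Set.Ioo a b))
    (hppos : ∀ᵐ x ∂(volume.restrict (Set.Ioo a b)), 0 < p x)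
    (hrpos : ∀ᵐ x ∂(volume.restrict (Set.Ioo a b)), 0 < r x)
    -- Dirichlet eigenvalues and eigenfunctions
    (lamD : ℕ → ℝ) (Psi Psi1 : ℕ → ℝ → ℝ)
    (hDmono : StrictMono lamD)
    (hDsol : ∀ n, SLSolution a b (lamD n) p q r s (Psi n) (Psi1 n))
    (hDbc : ∀ n, Psi n a = 0 ∧ Psi n b = 0)
    (hDnt : ∀ n, ∃ x ∈ Set.Icc a b, Psi n x ≠ 0)
    (hDzeros : ∀ n, {x ∈ Set.Ioo a b | Psi n x = 0}.Finite ∧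
      {x ∈ Set.Ioo a b | Psi n x = 0}.ncard = n)
    -- separated eigenvalues and eigenfunctions
    (lamS : ℝ → ℝ → ℕ → ℝ) (wS wS1 : ℝ → ℝ → ℕ → ℝ → ℝ)
    (hSmono : ∀ α ∈ Set.Ico 0 Real.pi, ∀ β ∈ Set.Ioc 0 Real.pi,
      StrictMono (lamS α β))
    (hSβmono : ∀ α ∈ Set.Ico 0 Real.pi, ∀ β₁ ∈ Set.Ioc 0 Real.pi,
      ∀ β₂ ∈ Set.Ioc 0 Real.pi, ∀ n, β₁ < β₂ → lamS α β₁ n < lamS α β₂ n)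
    (hSsol : ∀ α ∈ Set.Ico 0 Real.pi, ∀ β ∈ Set.Ioc 0 Real.pi, ∀ n,
      SLSolution a b (lamS α β n) p q r s (wS α β n) (wS1 α β n))
    (hSbc : ∀ α ∈ Set.Ico 0 Real.pi, ∀ β ∈ Set.Ioc 0 Real.pi, ∀ n,
      Real.cos α * wS α β n a - Real.sin α * wS1 α β n a = 0 ∧
      Real.cos β * wS α β n b - Real.sin β * wS1 α β n b = 0)
    (hSnt : ∀ α ∈ Set.Ico 0 Real.pi, ∀ β ∈ Set.Ioc 0 Real.pi, ∀ n,
      ∃ x ∈ Set.Icc a b, wS α β n x ≠ 0)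
    (hSzeros : ∀ α ∈ Set.Ico 0 Real.pi, ∀ β ∈ Set.Ioc 0 Real.pi, ∀ n,
      {x ∈ Set.Ioo a b | wS α β n x = 0}.Finite ∧
      {x ∈ Set.Ioo a b | wS α β n x = 0}.ncard = n) :
    (∀ α ∈ Set.Ico 0 Real.pi, ∀ β ∈ Set.Ioc 0 Real.pi, ∀ n : ℕ,
      ∀ (lam : ℝ) (y y1 : ℝ → ℝ),
        SLSolution a b lam p q r s y y1 →
        Real.cos α * y a - Real.sin α * y1 a = 0 →
        Real.cos β * y b - Real.sin β * y1 b = 0 →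
        (∃ x ∈ Set.Icc a b, y x ≠ 0) →
        lamD n < lam →
        ∃ Z : Finset ℝ, (↑Z : Set ℝ) ⊆ {x ∈ Set.Ioo a b | y x = 0} ∧
          n + 1 ≤ Z.card) ∧
    (∀ α ∈ Set.Ico 0 Real.pi, ∀ β ∈ Set.Ioc 0 Real.pi, ∀ n,
      lamS α β n ≤ lamD n) := by
  have part1 : ∀ α ∈ Set.Ico 0 Real.pi, ∀ β ∈ Set.Ioc 0 Real.pi, ∀ n : ℕ,
      ∀ (lam : ℝ) (y y1 : ℝ → ℝ),
        SLSolution a b lam p q r s y y1 →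
        Real.cos α * y a - Real.sin α * y1 a = 0 →
        Real.cos β * y b - Real.sin β * y1 b = 0 →
        (∃ x ∈ Set.Icc a b, y x ≠ 0) →
        lamD n < lam →
        ∃ Z : Finset ℝ, (↑Z : Set ℝ) ⊆ {x ∈ Set.Ioo a b | y x = 0} ∧
          n + 1 ≤ Z.card := by
    intro α hα β hβ n lam y y1 hsol hbca hbcb hnt hgt
    have hDs := hDsol n
    have P : ∀ c d : ℝ, a ≤ c → c < d → d ≤ b → Psi n c = 0 → Psi n d = 0 →
        (∀ x ∈ Set.Ioo c d, Psi n x ≠ 0) → ∃ x ∈ Set.Ioo c d, y x = 0 := by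
      intro c d h1 h2 h3 h4 h5 h6
      exact zero_in_gap hp hq hr hs hppos hrpos hsol hDs hgt
        ⟨h1, h2.le.trans h3⟩ ⟨h1.trans h2.le, h3⟩ h2 h4 h5 h6
    exact count_zeros a b (Psi n) y P n a le_rfl hab (hDbc n).1 (hDbc n).2
      (hDzeros n).1 (hDzeros n).2
  refine ⟨part1, ?_⟩
  intro α hα β hβ n
  by_contra hcon
  push_neg at hcon
  obtain ⟨Z, hZsub, hZcard⟩ := part1 α hα β hβ n (lamS α β n) (wS α β n) (wS1 α β n)
    (hSsol α hα β hβ n) (hSbc α hα β hβ n).1 (hSbc α hα β hβ n).2 (hSnt α hα β hβ n) hcon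
  have h1 : (↑Z : Set ℝ).ncard ≤ n := by
    rw [← (hSzeros α hα β hβ n).2]
    exact Set.ncard_le_ncard hZsub (hSzeros α hα β hβ n).1
  rw [Set.ncard_coe_finset] at h1
  omega
end

section
/- Let D(λ) = trace(K⁻¹Φ(b,λ)) for K ∈ SL(2,ℝ), where Φ is the fundamental matrix of the distributional Sturm–Liouville system. A number λ ∈ ℂ is an eigenvalue of the coupled self-adjoint problem Y(b) = e^{iγ}K Y(a) (γ ∈ (−π,0)∪(0,π)) if and only if D(λ) = 2cos γ; and λ is an eigenvalue of Y(b) = K Y(a) if and only if D(λ) = 2. -/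
open MeasureTheory intervalIntegral Set Real
open Filter Topology

/-- A complex (Carathéodory) solution of the distributional Sturm–Liouville system
`y′ = (1/p)·y¹ − s·y`, `(y¹)′ = s·y¹ + (q − λr)·y` on `[a,b]`, in integral form. -/
def SLCSolution (a b : ℝ) (lam : ℂ) (p q r s : ℝ → ℝ) (y y1 : ℝ → ℂ) : Prop :=
  ContinuousOn y (Set.Icc a b) ∧ ContinuousOn y1 (Set.Icc a b) ∧
  ∀ x ∈ Set.Icc a b,
    y x = y a + ∫ t in a..x, ((1 / p t : ℝ) * y1 t - (s t : ℝ) * y t) ∧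
    y1 x = y1 a + ∫ t in a..x, ((s t : ℝ) * y1 t + ((q t : ℝ) - lam * (r t : ℝ)) * y t)


-- integrable coefficient times continuous function
lemma mul_cont_int {a b : ℝ} {c u : ℝ → ℂ}
    (hc : IntegrableOn c (Set.Ioc a b)) (hu : ContinuousOn u (Set.Icc a b)) :
    IntegrableOn (fun t => c t * u t) (Set.Ioc a b) := by
  obtain ⟨C, hC⟩ := isCompact_Icc.exists_bound_of_continuousOn hu
  have hum : AEStronglyMeasurable u (volume.restrict (Set.Ioc a b)) :=
    (hu.mono Set.Ioc_subset_Icc_self).aestronglyMeasurable measurableSet_Ioc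
  refine Integrable.mono' (hc.norm.mul_const C) (hc.aestronglyMeasurable.mul hum) ?_
  filter_upwards [ae_restrict_mem measurableSet_Ioc] with t ht
  have := hC t (Set.Ioc_subset_Icc_self ht)
  calc ‖c t * u t‖ = ‖c t‖ * ‖u t‖ := norm_mul _ _
    _ ≤ ‖c t‖ * C := by
        exact mul_le_mul_of_nonneg_left this (norm_nonneg _)

lemma mul_cont_int_real {a b : ℝ} {c u : ℝ → ℝ}
    (hc : IntegrableOn c (Set.Ioc a b)) (hu : ContinuousOn u (Set.Icc a b)) :
    IntegrableOn (fun t => c t * u t) (Set.Ioc a b) := by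
  obtain ⟨C, hC⟩ := isCompact_Icc.exists_bound_of_continuousOn hu
  have hum : AEStronglyMeasurable u (volume.restrict (Set.Ioc a b)) :=
    (hu.mono Set.Ioc_subset_Icc_self).aestronglyMeasurable measurableSet_Ioc
  refine Integrable.mono' (hc.norm.mul_const C) (hc.aestronglyMeasurable.mul hum) ?_
  filter_upwards [ae_restrict_mem measurableSet_Ioc] with t ht
  have := hC t (Set.Ioc_subset_Icc_self ht)
  calc ‖c t * u t‖ = ‖c t‖ * ‖u t‖ := norm_mul _ _
    _ ≤ ‖c t‖ * C := mul_le_mul_of_nonneg_left this (norm_nonneg _)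


lemma fubini_sym {a b : ℝ} {f g : ℝ → ℂ}
    (hf : IntegrableOn f (Set.Ioc a b)) (hg : IntegrableOn g (Set.Ioc a b)) :
    (∫ t in Set.Ioc a b, f t * ∫ s in Set.Ioc a t, g s) +
      (∫ t in Set.Ioc a b, (∫ s in Set.Ioc a t, f s) * g t) =
    (∫ t in Set.Ioc a b, f t) * ∫ t in Set.Ioc a b, g t := by
  set μ := volume.restrict (Set.Ioc a b) with hμ
  have key : ∀ (u : ℝ → ℂ), IntegrableOn u (Set.Ioc a b) → ∀ t ∈ Set.Ioc a b,
      ∫ s in Set.Ioc a t, u s = ∫ s, (Set.Iic t).indicator u s ∂μ := by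
    intro u hu t ht
    have hset : Set.Iic t ∩ Set.Ioc a b = Set.Ioc a t := by
      ext s
      simp only [Set.mem_inter_iff, Set.mem_Iic, Set.mem_Ioc]
      constructor
      · rintro ⟨h1, h2, h3⟩; exact ⟨h2, h1⟩
      · rintro ⟨h1, h2⟩; exact ⟨h2, h1, h2.trans ht.2⟩
    rw [MeasureTheory.integral_indicator measurableSet_Iic, hμ,
      Measure.restrict_restrict measurableSet_Iic, hset]
  have hE : MeasurableSet {z : ℝ × ℝ | z.2 ≤ z.1} :=
    (isClosed_le continuous_snd continuous_fst).measurableSet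
  have hE2 : MeasurableSet {z : ℝ × ℝ | z.1 ≤ z.2} :=
    (isClosed_le continuous_fst continuous_snd).measurableSet
  set F : ℝ × ℝ → ℂ := fun z => f z.1 * g z.2 with hF
  set G : ℝ × ℝ → ℂ := fun z => g z.1 * f z.2 with hG
  have hFi : Integrable F (μ.prod μ) := hf.mul_prod hg
  have hGi : Integrable G (μ.prod μ) := hg.mul_prod hf
  have hIE : Integrable ({z : ℝ × ℝ | z.2 ≤ z.1}.indicator F) (μ.prod μ) := hFi.indicator hE
  have hIE2 : Integrable ({z : ℝ × ℝ | z.1 ≤ z.2}.indicator F) (μ.prod μ) := hFi.indicator hE2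
  have hIGE : Integrable ({z : ℝ × ℝ | z.2 ≤ z.1}.indicator G) (μ.prod μ) := hGi.indicator hE
  -- term 1
  have t1 : (∫ t in Set.Ioc a b, f t * ∫ s in Set.Ioc a t, g s)
      = ∫ t, (∫ s, {z : ℝ × ℝ | z.2 ≤ z.1}.indicator F (t, s) ∂μ) ∂μ := by
    refine integral_congr_ae ?_
    filter_upwards [ae_restrict_mem measurableSet_Ioc] with t ht
    rw [key g hg t ht, ← MeasureTheory.integral_const_mul]
    refine integral_congr_ae (Filter.Eventually.of_forall fun s => ?_)
    by_cases hs : s ≤ t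
    · simp [Set.indicator_of_mem, hs, hF]
    · simp [Set.indicator_of_notMem, hs, hF]
  -- term 2
  have t2 : (∫ t in Set.Ioc a b, (∫ s in Set.Ioc a t, f s) * g t)
      = ∫ t, (∫ s, {z : ℝ × ℝ | z.1 ≤ z.2}.indicator F (t, s) ∂μ) ∂μ := by
    have step : (∫ t in Set.Ioc a b, (∫ s in Set.Ioc a t, f s) * g t)
        = ∫ t, (∫ s, {z : ℝ × ℝ | z.2 ≤ z.1}.indicator G (t, s) ∂μ) ∂μ := by
      refine integral_congr_ae ?_
      filter_upwards [ae_restrict_mem measurableSet_Ioc] with t ht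
      rw [key f hf t ht, ← MeasureTheory.integral_mul_const]
      refine integral_congr_ae (Filter.Eventually.of_forall fun s => ?_)
      by_cases hs : s ≤ t
      · simp [Set.indicator_of_mem, hs, hG, mul_comm]
      · simp [Set.indicator_of_notMem, hs, hG]
    rw [step, show (∫ t, (∫ s, {z : ℝ × ℝ | z.2 ≤ z.1}.indicator G (t, s) ∂μ) ∂μ)
        = ∫ s, (∫ t, {z : ℝ × ℝ | z.2 ≤ z.1}.indicator G (t, s) ∂μ) ∂μ from
      integral_integral_swap (f := fun t s => {z : ℝ × ℝ | z.2 ≤ z.1}.indicator G (t, s))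
        (by exact hIGE)]
    refine integral_congr_ae (Filter.Eventually.of_forall fun t => ?_)
    refine integral_congr_ae (Filter.Eventually.of_forall fun s => ?_)
    by_cases hs : t ≤ s
    · simp only [Set.indicator_of_mem, hs, Set.mem_setOf_eq, hG, hF]; ring
    · simp [Set.indicator_of_notMem, hs, hG, hF]
  rw [t1, t2, ← integral_add hIE.integral_prod_left hIE2.integral_prod_left]
  have : (fun t => (∫ s, {z : ℝ × ℝ | z.2 ≤ z.1}.indicator F (t, s) ∂μ)
        + (∫ s, {z : ℝ × ℝ | z.1 ≤ z.2}.indicator F (t, s) ∂μ))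
      =ᵐ[μ] fun t => f t * ∫ s, g s ∂μ := by
    filter_upwards [hIE.prod_right_ae, hIE2.prod_right_ae] with t h1t h2t
    rw [← integral_add h1t h2t, ← MeasureTheory.integral_const_mul]
    refine integral_congr_ae ?_
    have h0 : μ {t} = 0 :=
      le_antisymm (le_trans (Measure.restrict_le_self _) (by simp)) zero_le
    have hne : ∀ᵐ s ∂μ, s ≠ t := by
      rw [ae_iff]
      convert h0 using 2
      simp
    filter_upwards [hne] with s hs
    rcases lt_or_gt_of_ne hs with h | h
    · simp [Set.indicator_of_mem, Set.indicator_of_notMem, h.le, not_le.mpr h, hF]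
    · simp [Set.indicator_of_mem, Set.indicator_of_notMem, h.le, not_le.mpr h, hF]
  rw [integral_congr_ae this, MeasureTheory.integral_mul_const]

lemma mul_cont_int' {a b : ℝ} {c u : ℝ → ℂ}
    (hc : IntegrableOn c (Set.Ioc a b)) (hu : ContinuousOn u (Set.Icc a b)) :
    IntegrableOn (fun t => u t * c t) (Set.Ioc a b) :=
  (mul_cont_int hc hu).congr_fun (fun t _ => mul_comm _ _) measurableSet_Ioc

lemma prod_rule {a b : ℝ} (hab : a ≤ b) {f g : ℝ → ℂ}
    (hf : IntegrableOn f (Set.Ioc a b)) (hg : IntegrableOn g (Set.Ioc a b))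
    {F G : ℝ → ℂ}
    (hF : ∀ x ∈ Set.Icc a b, F x = F a + ∫ t in a..x, f t)
    (hG : ∀ x ∈ Set.Icc a b, G x = G a + ∫ t in a..x, g t) :
    F b * G b - F a * G a = ∫ t in Set.Ioc a b, (f t * G t + F t * g t) := by
  have hfIcc : IntegrableOn f (Set.Icc a b) := by
    rwa [IntegrableOn, Measure.restrict_congr_set Ioc_ae_eq_Icc] at hf
  have hgIcc : IntegrableOn g (Set.Icc a b) := by
    rwa [IntegrableOn, Measure.restrict_congr_set Ioc_ae_eq_Icc] at hg
  have hIfc : ContinuousOn (fun t => ∫ s in Set.Ioc a t, f s) (Set.Icc a b) :=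
    continuousOn_primitive hfIcc
  have hIgc : ContinuousOn (fun t => ∫ s in Set.Ioc a t, g s) (Set.Icc a b) :=
    continuousOn_primitive hgIcc
  have hF' : ∀ x ∈ Set.Icc a b, F x = F a + ∫ s in Set.Ioc a x, f s := fun x hx => by
    rw [hF x hx, integral_of_le hx.1]
  have hG' : ∀ x ∈ Set.Icc a b, G x = G a + ∫ s in Set.Ioc a x, g s := fun x hx => by
    rw [hG x hx, integral_of_le hx.1]
  have hA : IntegrableOn (fun t => f t * G a) (Set.Ioc a b) := hf.mul_const _
  have hB : IntegrableOn (fun t => f t * ∫ s in Set.Ioc a t, g s) (Set.Ioc a b) :=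
    mul_cont_int hf hIgc
  have hC : IntegrableOn (fun t => (∫ s in Set.Ioc a t, f s) * g t) (Set.Ioc a b) :=
    mul_cont_int' hg hIfc
  have hD : IntegrableOn (fun t => F a * g t) (Set.Ioc a b) := hg.const_mul _
  have step : (∫ t in Set.Ioc a b, (f t * G t + F t * g t))
      = ∫ t in Set.Ioc a b, ((f t * G a + f t * ∫ s in Set.Ioc a t, g s)
        + ((∫ s in Set.Ioc a t, f s) * g t + F a * g t)) := by
    refine setIntegral_congr_fun measurableSet_Ioc fun t ht => ?_
    rw [hG' t (Set.Ioc_subset_Icc_self ht), hF' t (Set.Ioc_subset_Icc_self ht)]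
    ring
  have h1 : Integrable (fun t => f t * G a + f t * ∫ s in Set.Ioc a t, g s)
      (volume.restrict (Set.Ioc a b)) := hA.add hB
  have h2 : Integrable (fun t => (∫ s in Set.Ioc a t, f s) * g t + F a * g t)
      (volume.restrict (Set.Ioc a b)) := hC.add hD
  rw [step, integral_add h1 h2, integral_add hA hB, integral_add hC hD,
    MeasureTheory.integral_mul_const, MeasureTheory.integral_const_mul]
  have hfs := fubini_sym hf hg
  rw [hF' b (Set.right_mem_Icc.mpr hab), hG' b (Set.right_mem_Icc.mpr hab)]
  linear_combination -hfs

lemma gronwall_zero {a b : ℝ} (hab : a ≤ b) {m : ℝ → ℝ}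
    (hm : IntegrableOn m (Set.Ioc a b)) (hm0 : ∀ t, 0 ≤ m t) {g : ℝ → ℝ}
    (hg : ContinuousOn g (Set.Icc a b)) (hg0 : ∀ x ∈ Set.Icc a b, 0 ≤ g x)
    (hineq : ∀ x ∈ Set.Icc a b, g x ≤ ∫ t in a..x, m t * g t) :
    ∀ x ∈ Set.Icc a b, g x = 0 := by
  have hmg : IntegrableOn (fun t => m t * g t) (Set.Ioc a b) := mul_cont_int_real hm hg
  have hmgI : ∀ x ∈ Set.Icc a b, ∀ y ∈ Set.Icc a b, x ≤ y →
      IntervalIntegrable (fun t => m t * g t) volume x y := by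
    intro x hx y hy hxy
    rw [intervalIntegrable_iff_integrableOn_Ioc_of_le hxy]
    exact hmg.mono_set (Set.Ioc_subset_Ioc hx.1 hy.2)
  have hmI : ∀ x ∈ Set.Icc a b, ∀ y ∈ Set.Icc a b, x ≤ y →
      IntervalIntegrable m volume x y := by
    intro x hx y hy hxy
    rw [intervalIntegrable_iff_integrableOn_Ioc_of_le hxy]
    exact hm.mono_set (Set.Ioc_subset_Ioc hx.1 hy.2)
  have hz : ∀ c ∈ Set.Icc a b, (∀ z ∈ Set.Ico a c, g z = 0) →
      ∫ t in a..c, m t * g t = 0 := by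
    intro c hc h0
    rw [integral_of_le hc.1]
    refine integral_eq_zero_of_ae ?_
    have hne : ∀ᵐ t ∂(volume.restrict (Set.Ioc a c)), t ≠ c := by
      refine ae_restrict_of_ae ?_
      have hset : {x : ℝ | ¬ x ≠ c} = {c} := by ext x; simp
      rw [ae_iff, hset]
      exact measure_singleton c
    filter_upwards [ae_restrict_mem measurableSet_Ioc, hne] with t ht htc
    simp [h0 t ⟨ht.1.le, lt_of_le_of_ne ht.2 htc⟩]
  set S := {x | x ∈ Set.Icc a b ∧ ∀ z ∈ Set.Icc a x, g z = 0} with hS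
  have haS : a ∈ S := by
    refine ⟨Set.left_mem_Icc.mpr hab, fun z hz' => ?_⟩
    have hza : z = a := le_antisymm hz'.2 hz'.1
    subst hza
    have h := hineq z (Set.left_mem_Icc.mpr hab)
    rw [intervalIntegral.integral_same] at h
    exact le_antisymm h (hg0 z (Set.left_mem_Icc.mpr hab))
  have bdd : BddAbove S := ⟨b, fun x hx => hx.1.2⟩
  set c := sSup S with hc
  have hcab : c ∈ Set.Icc a b := ⟨le_csSup bdd haS, csSup_le ⟨a, haS⟩ fun x hx => hx.1.2⟩
  have hIco : ∀ z ∈ Set.Ico a c, g z = 0 := by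
    intro z hz'
    obtain ⟨x, hxS, hzx⟩ := exists_lt_of_lt_csSup ⟨a, haS⟩ hz'.2
    exact hxS.2 z ⟨hz'.1, hzx.le⟩
  have hgc : g c = 0 := by
    have h := hineq c hcab
    rw [hz c hcab hIco] at h
    exact le_antisymm h (hg0 c hcab)
  have hcS : c ∈ S := by
    refine ⟨hcab, fun z hz' => ?_⟩
    rcases eq_or_lt_of_le hz'.2 with h | h
    · rw [h]; exact hgc
    · exact hIco z ⟨hz'.1, h⟩
  have hnotlt : ¬ c < b := by
    intro hcb
    set N : ℝ → ℝ := fun x => ∫ t in Set.Ioc a x, m t with hN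
    have hmIcc : IntegrableOn m (Set.Icc a b) := by
      rwa [IntegrableOn, Measure.restrict_congr_set Ioc_ae_eq_Icc] at hm
    have hNc : ContinuousOn N (Set.Icc a b) := continuousOn_primitive hmIcc
    have hle : 𝓝[>] c ≤ 𝓝[Set.Icc a b] c := by
      refine nhdsWithin_le_iff.mpr ?_
      exact Filter.mem_of_superset (Ioc_mem_nhdsGT_of_mem ⟨le_refl c, hcb⟩)
        fun x hx => ⟨hcab.1.trans hx.1.le, hx.2⟩
    have hto : Filter.Tendsto N (𝓝[>] c) (𝓝 (N c)) := (hNc c hcab).mono_left hle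
    have hev1 : ∀ᶠ x in 𝓝[>] c, N x < N c + 1/2 :=
      hto.eventually (gt_mem_nhds (by linarith))
    have hev2 : ∀ᶠ x in 𝓝[>] c, x ∈ Set.Ioc c b :=
      Filter.eventually_of_mem (Ioc_mem_nhdsGT_of_mem ⟨le_refl c, hcb⟩) fun x hx => hx
    obtain ⟨d, hd1, hd2⟩ := (hev1.and hev2).exists
    have hcd : c < d := hd2.1
    have hdb : d ≤ b := hd2.2
    have hdab : d ∈ Set.Icc a b := ⟨hcab.1.trans hcd.le, hdb⟩
    have hNeq : ∀ x ∈ Set.Icc a b, N x = ∫ t in a..x, m t := fun x hx =>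
      (integral_of_le hx.1).symm
    have hmcd : ∫ t in c..d, m t < 1/2 := by
      have hadj : (∫ t in a..c, m t) + ∫ t in c..d, m t = ∫ t in a..d, m t :=
        integral_add_adjacent_intervals (hmI a (Set.left_mem_Icc.mpr hab) c hcab hcab.1)
          (hmI c hcab d hdab hcd.le)
      have e1 := hNeq c hcab
      have e2 := hNeq d hdab
      have := hd1
      rw [e1, e2] at this
      linarith
    obtain ⟨x0, hx0mem, hx0max⟩ := isCompact_Icc.exists_isMaxOn (Set.nonempty_Icc.mpr hcd.le)
      (hg.mono (Set.Icc_subset_Icc hcab.1 hdb))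
    set M0 := g x0 with hM0def
    have hsub : ∀ z ∈ Set.Icc c d, z ∈ Set.Icc a b := fun z hz' =>
      ⟨hcab.1.trans hz'.1, hz'.2.trans hdb⟩
    have hM0 : 0 ≤ M0 := hg0 x0 (hsub x0 hx0mem)
    have key : ∀ x ∈ Set.Icc c d, g x ≤ M0 * ∫ t in c..d, m t := by
      intro x hx
      have hxab : x ∈ Set.Icc a b := hsub x hx
      have hsplit : (∫ t in a..c, m t * g t) + ∫ t in c..x, m t * g t
          = ∫ t in a..x, m t * g t :=
        integral_add_adjacent_intervals (hmgI a (Set.left_mem_Icc.mpr hab) c hcab hcab.1)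
          (hmgI c hcab x hxab hx.1)
      have h0 : ∫ t in a..c, m t * g t = 0 := hz c hcab hIco
      have mono1 : ∫ t in c..x, m t * g t ≤ ∫ t in c..x, m t * M0 := by
        refine integral_mono_on hx.1 (hmgI c hcab x hxab hx.1)
          ((hmI c hcab x hxab hx.1).mul_const _) fun t ht => ?_
        exact mul_le_mul_of_nonneg_left (hx0max ⟨ht.1, ht.2.trans hx.2⟩) (hm0 t)
      have mono2 : ∫ t in c..x, m t ≤ ∫ t in c..d, m t := by
        have hadj : (∫ t in c..x, m t) + ∫ t in x..d, m t = ∫ t in c..d, m t :=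
          integral_add_adjacent_intervals (hmI c hcab x hxab hx.1)
            (hmI x hxab d hdab hx.2)
        have hpos : 0 ≤ ∫ t in x..d, m t :=
          integral_nonneg hx.2 fun t _ => hm0 t
        linarith
      have heq : ∫ t in c..x, m t * M0 = (∫ t in c..x, m t) * M0 :=
        integral_mul_const _ _
      have h := hineq x hxab
      have : (∫ t in c..x, m t) * M0 ≤ (∫ t in c..d, m t) * M0 :=
        mul_le_mul_of_nonneg_right mono2 hM0
      rw [mul_comm]
      linarith
    have hM0le := key x0 hx0mem
    have hM0zero : M0 = 0 := by nlinarith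
    have hgcd : ∀ z ∈ Set.Icc c d, g z = 0 := fun z hz' =>
      le_antisymm ((hx0max hz').trans_eq hM0zero) (hg0 z (hsub z hz'))
    have hdS : d ∈ S := by
      refine ⟨hdab, fun z hz' => ?_⟩
      rcases le_total z c with h | h
      · exact hcS.2 z ⟨hz'.1, h⟩
      · exact hgcd z ⟨h, hz'.2⟩
    exact absurd (le_csSup bdd hdS) (not_le.mpr hcd)
  have hcb : c = b := le_antisymm hcab.2 (not_lt.mp hnotlt)
  intro x hx
  exact hcS.2 x ⟨hx.1, hx.2.trans_eq hcb.symm⟩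

section SLC

variable {a b : ℝ} {lam : ℂ} {p q r s : ℝ → ℝ}

lemma int_to_interval {E : Type*} [NormedAddCommGroup E] {x : ℝ} {f : ℝ → E} (hf : IntegrableOn f (Set.Ioc a b))
    (hx : x ∈ Set.Icc a b) : IntervalIntegrable f volume a x := by
  rw [intervalIntegrable_iff_integrableOn_Ioc_of_le hx.1]
  exact hf.mono_set (Set.Ioc_subset_Ioc_right hx.2)

lemma slc_int1 (hp : IntegrableOn (fun x => 1 / p x) (Set.Ioc a b))
    (hs : IntegrableOn s (Set.Ioc a b)) {y y1 : ℝ → ℂ}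
    (hy : ContinuousOn y (Set.Icc a b)) (hy1 : ContinuousOn y1 (Set.Icc a b)) :
    IntegrableOn (fun t => ((1 / p t : ℝ) : ℂ) * y1 t - ((s t : ℝ) : ℂ) * y t)
      (Set.Ioc a b) := by
  have h1 : IntegrableOn (fun t => ((1 / p t : ℝ) : ℂ) * y1 t) (Set.Ioc a b) :=
    mul_cont_int hp.ofReal hy1
  have h2 : IntegrableOn (fun t => ((s t : ℝ) : ℂ) * y t) (Set.Ioc a b) :=
    mul_cont_int hs.ofReal hy
  exact h1.sub h2

lemma slc_int2 (hq : IntegrableOn q (Set.Ioc a b)) (hr : IntegrableOn r (Set.Ioc a b))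
    (hs : IntegrableOn s (Set.Ioc a b)) {y y1 : ℝ → ℂ}
    (hy : ContinuousOn y (Set.Icc a b)) (hy1 : ContinuousOn y1 (Set.Icc a b)) :
    IntegrableOn (fun t => ((s t : ℝ) : ℂ) * y1 t + (((q t : ℝ) : ℂ) - lam * ((r t : ℝ) : ℂ)) * y t)
      (Set.Ioc a b) := by
  have hc : IntegrableOn (fun t => ((q t : ℝ) : ℂ) - lam * ((r t : ℝ) : ℂ)) (Set.Ioc a b) :=
    hq.ofReal.sub (hr.ofReal.const_mul lam)
  have h1 : IntegrableOn (fun t => ((s t : ℝ) : ℂ) * y1 t) (Set.Ioc a b) :=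
    mul_cont_int hs.ofReal hy1
  have h2 : IntegrableOn
      (fun t => (((q t : ℝ) : ℂ) - lam * ((r t : ℝ) : ℂ)) * y t) (Set.Ioc a b) :=
    mul_cont_int hc hy
  exact h1.add h2

lemma slc_comb (hab : a ≤ b)
    (hp : IntegrableOn (fun x => 1 / p x) (Set.Ioc a b))
    (hq : IntegrableOn q (Set.Ioc a b)) (hr : IntegrableOn r (Set.Ioc a b))
    (hs : IntegrableOn s (Set.Ioc a b)) (c d : ℂ) {y y1 z z1 : ℝ → ℂ}
    (hy : SLCSolution a b lam p q r s y y1) (hz : SLCSolution a b lam p q r s z z1) :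
    SLCSolution a b lam p q r s (fun x => c * y x + d * z x)
      (fun x => c * y1 x + d * z1 x) := by
  obtain ⟨hyc, hy1c, hyi⟩ := hy
  obtain ⟨hzc, hz1c, hzi⟩ := hz
  refine ⟨(continuousOn_const.mul hyc).add (continuousOn_const.mul hzc),
    (continuousOn_const.mul hy1c).add (continuousOn_const.mul hz1c), fun x hx => ?_⟩
  constructor
  · have e : ∀ t : ℝ, ((1 / p t : ℝ) : ℂ) * (c * y1 t + d * z1 t)
        - ((s t : ℝ) : ℂ) * (c * y t + d * z t)
        = c * (((1 / p t : ℝ) : ℂ) * y1 t - ((s t : ℝ) : ℂ) * y t)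
          + d * (((1 / p t : ℝ) : ℂ) * z1 t - ((s t : ℝ) : ℂ) * z t) := fun t => by ring
    rw [intervalIntegral.integral_congr (g := fun t =>
        c * (((1 / p t : ℝ) : ℂ) * y1 t - ((s t : ℝ) : ℂ) * y t)
          + d * (((1 / p t : ℝ) : ℂ) * z1 t - ((s t : ℝ) : ℂ) * z t)) (fun t _ => e t),
      integral_add ((int_to_interval (slc_int1 hp hs hyc hy1c) hx).const_mul c)
        ((int_to_interval (slc_int1 hp hs hzc hz1c) hx).const_mul d),
      intervalIntegral.integral_const_mul, intervalIntegral.integral_const_mul]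
    linear_combination c * (hyi x hx).1 + d * (hzi x hx).1
  · have e : ∀ t : ℝ, ((s t : ℝ) : ℂ) * (c * y1 t + d * z1 t)
        + (((q t : ℝ) : ℂ) - lam * ((r t : ℝ) : ℂ)) * (c * y t + d * z t)
        = c * (((s t : ℝ) : ℂ) * y1 t + (((q t : ℝ) : ℂ) - lam * ((r t : ℝ) : ℂ)) * y t)
          + d * (((s t : ℝ) : ℂ) * z1 t + (((q t : ℝ) : ℂ) - lam * ((r t : ℝ) : ℂ)) * z t) :=
      fun t => by ring
    rw [intervalIntegral.integral_congr (g := fun t =>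
        c * (((s t : ℝ) : ℂ) * y1 t + (((q t : ℝ) : ℂ) - lam * ((r t : ℝ) : ℂ)) * y t)
          + d * (((s t : ℝ) : ℂ) * z1 t + (((q t : ℝ) : ℂ) - lam * ((r t : ℝ) : ℂ)) * z t))
        (fun t _ => e t),
      integral_add ((int_to_interval (slc_int2 hq hr hs hyc hy1c) hx).const_mul c)
        ((int_to_interval (slc_int2 hq hr hs hzc hz1c) hx).const_mul d),
      intervalIntegral.integral_const_mul, intervalIntegral.integral_const_mul]
    linear_combination c * (hyi x hx).2 + d * (hzi x hx).2

lemma slc_unique (hab : a ≤ b)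
    (hp : IntegrableOn (fun x => 1 / p x) (Set.Ioc a b))
    (hq : IntegrableOn q (Set.Ioc a b)) (hr : IntegrableOn r (Set.Ioc a b))
    (hs : IntegrableOn s (Set.Ioc a b)) {y y1 : ℝ → ℂ}
    (hy : SLCSolution a b lam p q r s y y1) (h0 : y a = 0) (h01 : y1 a = 0) :
    ∀ x ∈ Set.Icc a b, y x = 0 ∧ y1 x = 0 := by
  obtain ⟨hyc, hy1c, hyi⟩ := hy
  set m : ℝ → ℝ := fun t => |1 / p t| + |q t| + ‖lam‖ * |r t| + |s t| with hm
  have hmint : IntegrableOn m (Set.Ioc a b) :=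
    ((hp.abs.add hq.abs).add (hr.abs.const_mul _)).add hs.abs
  have hm0 : ∀ t, 0 ≤ m t := by
    intro t
    have := norm_nonneg lam
    positivity
  set g : ℝ → ℝ := fun x => ‖y x‖ + ‖y1 x‖ with hgdef
  have hgc : ContinuousOn g (Set.Icc a b) := hyc.norm.add hy1c.norm
  have hg0 : ∀ x ∈ Set.Icc a b, 0 ≤ g x := fun x _ => by positivity
  have hineq : ∀ x ∈ Set.Icc a b, g x ≤ ∫ t in a..x, m t * g t := by
    intro x hx
    have e1 := (hyi x hx).1
    have e2 := (hyi x hx).2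
    rw [h0, zero_add] at e1
    rw [h01, zero_add] at e2
    have I1 := int_to_interval (slc_int1 hp hs hyc hy1c) hx
    have I2 := int_to_interval (slc_int2 (lam := lam) hq hr hs hyc hy1c) hx
    have b1 : ‖y x‖ ≤ ∫ t in a..x, ‖((1 / p t : ℝ) : ℂ) * y1 t - ((s t : ℝ) : ℂ) * y t‖ := by
      rw [e1]; exact intervalIntegral.norm_integral_le_integral_norm hx.1
    have b2 : ‖y1 x‖ ≤ ∫ t in a..x,
        ‖((s t : ℝ) : ℂ) * y1 t + (((q t : ℝ) : ℂ) - lam * ((r t : ℝ) : ℂ)) * y t‖ := by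
      rw [e2]; exact intervalIntegral.norm_integral_le_integral_norm hx.1
    have hsum : (∫ t in a..x, ‖((1 / p t : ℝ) : ℂ) * y1 t - ((s t : ℝ) : ℂ) * y t‖)
        + (∫ t in a..x,
          ‖((s t : ℝ) : ℂ) * y1 t + (((q t : ℝ) : ℂ) - lam * ((r t : ℝ) : ℂ)) * y t‖)
        = ∫ t in a..x, (‖((1 / p t : ℝ) : ℂ) * y1 t - ((s t : ℝ) : ℂ) * y t‖
          + ‖((s t : ℝ) : ℂ) * y1 t + (((q t : ℝ) : ℂ) - lam * ((r t : ℝ) : ℂ)) * y t‖) :=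
      (integral_add I1.norm I2.norm).symm
    have hmono : (∫ t in a..x, (‖((1 / p t : ℝ) : ℂ) * y1 t - ((s t : ℝ) : ℂ) * y t‖
          + ‖((s t : ℝ) : ℂ) * y1 t + (((q t : ℝ) : ℂ) - lam * ((r t : ℝ) : ℂ)) * y t‖))
        ≤ ∫ t in a..x, m t * g t := by
      refine integral_mono_on hx.1 (I1.norm.add I2.norm)
        (int_to_interval (mul_cont_int_real hmint hgc) hx) fun t _ => ?_
      have n1 : ‖((1 / p t : ℝ) : ℂ) * y1 t - ((s t : ℝ) : ℂ) * y t‖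
          ≤ |1 / p t| * ‖y1 t‖ + |s t| * ‖y t‖ := by
        refine (norm_sub_le _ _).trans ?_
        rw [norm_mul, norm_mul, Complex.norm_real, Complex.norm_real,
          Real.norm_eq_abs, Real.norm_eq_abs]
      have n2 : ‖((s t : ℝ) : ℂ) * y1 t + (((q t : ℝ) : ℂ) - lam * ((r t : ℝ) : ℂ)) * y t‖
          ≤ |s t| * ‖y1 t‖ + (|q t| + ‖lam‖ * |r t|) * ‖y t‖ := by
        refine (norm_add_le _ _).trans ?_
        gcongr
        · rw [norm_mul, Complex.norm_real, Real.norm_eq_abs]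
        · rw [norm_mul]
          gcongr
          refine (norm_sub_le _ _).trans ?_
          rw [norm_mul, Complex.norm_real, Complex.norm_real,
            Real.norm_eq_abs, Real.norm_eq_abs]
      have hy0 : (0:ℝ) ≤ ‖y t‖ := norm_nonneg _
      have hy10 : (0:ℝ) ≤ ‖y1 t‖ := norm_nonneg _
      have h1 : (0:ℝ) ≤ |1 / p t| := abs_nonneg _
      have h2 : (0:ℝ) ≤ |q t| := abs_nonneg _
      have h3 : (0:ℝ) ≤ ‖lam‖ * |r t| :=
        mul_nonneg (norm_nonneg _) (abs_nonneg _)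
      have h4 : (0:ℝ) ≤ |s t| := abs_nonneg _
      simp only [hm, hgdef]
      nlinarith [mul_nonneg h1 hy0, mul_nonneg h2 hy10, mul_nonneg h3 hy10,
        mul_nonneg h4 hy0]
    calc g x = ‖y x‖ + ‖y1 x‖ := rfl
      _ ≤ _ := add_le_add b1 b2
      _ = _ := hsum
      _ ≤ _ := hmono
  have hzero := gronwall_zero hab hmint hm0 hgc hg0 hineq
  intro x hx
  have h := hzero x hx
  have hy0 : ‖y x‖ = 0 := by
    have := norm_nonneg (y x); have := norm_nonneg (y1 x)
    simp only [hgdef] at h; linarith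
  have hy10 : ‖y1 x‖ = 0 := by
    have := norm_nonneg (y x); have := norm_nonneg (y1 x)
    simp only [hgdef] at h; linarith
  exact ⟨norm_eq_zero.mp hy0, norm_eq_zero.mp hy10⟩

lemma slc_repr (hab : a ≤ b)
    (hp : IntegrableOn (fun x => 1 / p x) (Set.Ioc a b))
    (hq : IntegrableOn q (Set.Ioc a b)) (hr : IntegrableOn r (Set.Ioc a b))
    (hs : IntegrableOn s (Set.Ioc a b)) {phi1 phi1q phi2 phi2q : ℝ → ℂ}
    (h1 : SLCSolution a b lam p q r s phi1 phi1q)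
    (h2 : SLCSolution a b lam p q r s phi2 phi2q)
    (hinit : phi1 a = 1 ∧ phi1q a = 0 ∧ phi2 a = 0 ∧ phi2q a = 1)
    {y y1 : ℝ → ℂ} (hy : SLCSolution a b lam p q r s y y1) :
    ∀ x ∈ Set.Icc a b, y x = y a * phi1 x + y1 a * phi2 x ∧
      y1 x = y a * phi1q x + y1 a * phi2q x := by
  have hA : SLCSolution a b lam p q r s (fun x => y a * phi1 x + y1 a * phi2 x)
      (fun x => y a * phi1q x + y1 a * phi2q x) :=
    slc_comb hab hp hq hr hs (y a) (y1 a) h1 h2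
  have hz : SLCSolution a b lam p q r s
      (fun x => (1 : ℂ) * y x + (-1 : ℂ) * (y a * phi1 x + y1 a * phi2 x))
      (fun x => (1 : ℂ) * y1 x + (-1 : ℂ) * (y a * phi1q x + y1 a * phi2q x)) :=
    slc_comb hab hp hq hr hs 1 (-1) hy hA
  have h0 : (1 : ℂ) * y a + (-1 : ℂ) * (y a * phi1 a + y1 a * phi2 a) = 0 := by
    rw [hinit.1, hinit.2.2.1]; ring
  have h01 : (1 : ℂ) * y1 a + (-1 : ℂ) * (y a * phi1q a + y1 a * phi2q a) = 0 := by
    rw [hinit.2.1, hinit.2.2.2]; ring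
  have huniq := slc_unique hab hp hq hr hs hz h0 h01
  intro x hx
  obtain ⟨u1, u2⟩ := huniq x hx
  constructor
  · linear_combination u1
  · linear_combination u2

lemma slc_wronskian (hab : a ≤ b)
    (hp : IntegrableOn (fun x => 1 / p x) (Set.Ioc a b))
    (hq : IntegrableOn q (Set.Ioc a b)) (hr : IntegrableOn r (Set.Ioc a b))
    (hs : IntegrableOn s (Set.Ioc a b)) {phi1 phi1q phi2 phi2q : ℝ → ℂ}
    (h1 : SLCSolution a b lam p q r s phi1 phi1q)
    (h2 : SLCSolution a b lam p q r s phi2 phi2q)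
    (hinit : phi1 a = 1 ∧ phi1q a = 0 ∧ phi2 a = 0 ∧ phi2q a = 1) :
    phi1 b * phi2q b - phi2 b * phi1q b = 1 := by
  obtain ⟨h1c, h1qc, h1i⟩ := h1
  obtain ⟨h2c, h2qc, h2i⟩ := h2
  have hf1 : IntegrableOn (fun t => ((1 / p t : ℝ) : ℂ) * phi1q t - ((s t : ℝ) : ℂ) * phi1 t)
      (Set.Ioc a b) := slc_int1 hp hs h1c h1qc
  have hf2 : IntegrableOn (fun t => ((1 / p t : ℝ) : ℂ) * phi2q t - ((s t : ℝ) : ℂ) * phi2 t)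
      (Set.Ioc a b) := slc_int1 hp hs h2c h2qc
  have hg1 : IntegrableOn (fun t => ((s t : ℝ) : ℂ) * phi1q t
      + (((q t : ℝ) : ℂ) - lam * ((r t : ℝ) : ℂ)) * phi1 t) (Set.Ioc a b) :=
    slc_int2 hq hr hs h1c h1qc
  have hg2 : IntegrableOn (fun t => ((s t : ℝ) : ℂ) * phi2q t
      + (((q t : ℝ) : ℂ) - lam * ((r t : ℝ) : ℂ)) * phi2 t) (Set.Ioc a b) :=
    slc_int2 hq hr hs h2c h2qc
  have P1 := prod_rule hab hf1 hg2 (F := phi1) (G := phi2q)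
    (fun x hx => (h1i x hx).1) (fun x hx => (h2i x hx).2)
  have P2 := prod_rule hab hf2 hg1 (F := phi2) (G := phi1q)
    (fun x hx => (h2i x hx).1) (fun x hx => (h1i x hx).2)
  have hcong : (∫ t in Set.Ioc a b,
        ((((1 / p t : ℝ) : ℂ) * phi1q t - ((s t : ℝ) : ℂ) * phi1 t) * phi2q t
          + phi1 t * (((s t : ℝ) : ℂ) * phi2q t
            + (((q t : ℝ) : ℂ) - lam * ((r t : ℝ) : ℂ)) * phi2 t)))
      = ∫ t in Set.Ioc a b,
        ((((1 / p t : ℝ) : ℂ) * phi2q t - ((s t : ℝ) : ℂ) * phi2 t) * phi1q t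
          + phi2 t * (((s t : ℝ) : ℂ) * phi1q t
            + (((q t : ℝ) : ℂ) - lam * ((r t : ℝ) : ℂ)) * phi1 t)) := by
    refine integral_congr_ae (Filter.Eventually.of_forall fun t => ?_)
    ring
  rw [hinit.1, hinit.2.2.2] at P1
  rw [hinit.2.2.1, hinit.2.1] at P2
  linear_combination P1 - P2 + hcong

lemma slc_eig_iff (hab : a ≤ b)
    (hp : IntegrableOn (fun x => 1 / p x) (Set.Ioc a b))
    (hq : IntegrableOn q (Set.Ioc a b)) (hr : IntegrableOn r (Set.Ioc a b))
    (hs : IntegrableOn s (Set.Ioc a b)) {phi1 phi1q phi2 phi2q : ℝ → ℂ}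
    (h1 : SLCSolution a b lam p q r s phi1 phi1q)
    (h2 : SLCSolution a b lam p q r s phi2 phi2q)
    (hinit : phi1 a = 1 ∧ phi1q a = 0 ∧ phi2 a = 0 ∧ phi2q a = 1)
    (k11 k12 k21 k22 : ℝ) (hdetK : k11 * k22 - k12 * k21 = 1)
    (D : ℂ)
    (hD : D = (k22 : ℂ) * phi1 b - (k12 : ℂ) * phi1q b
      - (k21 : ℂ) * phi2 b + (k11 : ℂ) * phi2q b)
    (μ : ℂ) (hμ : μ ≠ 0) :
    (∃ y y1 : ℝ → ℂ, SLCSolution a b lam p q r s y y1 ∧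
        (∃ x ∈ Set.Icc a b, y x ≠ 0 ∨ y1 x ≠ 0) ∧
        y b = μ * ((k11 : ℂ) * y a + (k12 : ℂ) * y1 a) ∧
        y1 b = μ * ((k21 : ℂ) * y a + (k22 : ℂ) * y1 a)) ↔ μ * D = 1 + μ ^ 2 := by
  have hW := slc_wronskian hab hp hq hr hs h1 h2 hinit
  have hdetK' : (k11 : ℂ) * k22 - (k12 : ℂ) * k21 = 1 := by exact_mod_cast hdetK
  have hbmem : b ∈ Set.Icc a b := Set.right_mem_Icc.mpr hab
  have hamem : a ∈ Set.Icc a b := Set.left_mem_Icc.mpr hab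
  constructor
  · rintro ⟨y, y1, hy, ⟨x, hx, hnz⟩, hb1, hb2⟩
    have hrepr := slc_repr hab hp hq hr hs h1 h2 hinit hy
    have hne : ¬(y a = 0 ∧ y1 a = 0) := by
      rintro ⟨e1, e2⟩
      obtain ⟨u1, u2⟩ := hrepr x hx
      rw [e1, e2] at u1 u2
      simp only [zero_mul, add_zero] at u1 u2
      rcases hnz with h | h
      · exact h u1
      · exact h u2
    obtain ⟨ub1, ub2⟩ := hrepr b hbmem
    have E1 : (phi1 b - μ * k11) * y a + (phi2 b - μ * k12) * y1 a = 0 := by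
      rw [ub1] at hb1; linear_combination hb1
    have E2 : (phi1q b - μ * k21) * y a + (phi2q b - μ * k22) * y1 a = 0 := by
      rw [ub2] at hb2; linear_combination hb2
    have hdet : (phi1 b - μ * k11) * (phi2q b - μ * k22)
        - (phi2 b - μ * k12) * (phi1q b - μ * k21) = 0 := by
      rcases not_and_or.mp hne with h | h
      · have t1 : ((phi1 b - μ * k11) * (phi2q b - μ * k22)
            - (phi2 b - μ * k12) * (phi1q b - μ * k21)) * y a = 0 := by
          linear_combination (phi2q b - μ * (k22 : ℂ)) * E1 - (phi2 b - μ * (k12 : ℂ)) * E2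
        exact (mul_eq_zero.mp t1).resolve_right h
      · have t2 : ((phi1 b - μ * k11) * (phi2q b - μ * k22)
            - (phi2 b - μ * k12) * (phi1q b - μ * k21)) * y1 a = 0 := by
          linear_combination (phi1 b - μ * (k11 : ℂ)) * E2 - (phi1q b - μ * (k21 : ℂ)) * E1
        exact (mul_eq_zero.mp t2).resolve_right h
    linear_combination -hdet + hW + μ ^ 2 * hdetK' + μ * hD
  · intro hμD
    have hdet : (phi1 b - μ * k11) * (phi2q b - μ * k22)
        - (phi2 b - μ * k12) * (phi1q b - μ * k21) = 0 := by
      linear_combination hW + μ ^ 2 * hdetK' + μ * hD - hμD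
    have hker : ∃ c1 c2 : ℂ, ¬(c1 = 0 ∧ c2 = 0) ∧
        (phi1 b - μ * k11) * c1 + (phi2 b - μ * k12) * c2 = 0 ∧
        (phi1q b - μ * k21) * c1 + (phi2q b - μ * k22) * c2 = 0 := by
      by_cases h : (phi1 b - μ * k11) = 0 ∧ (phi2 b - μ * k12) = 0
      · by_cases h' : (phi1q b - μ * k21) = 0 ∧ (phi2q b - μ * k22) = 0
        · exact ⟨1, 0, by simp, by simp [h.1, h.2], by simp [h'.1, h'.2]⟩
        · refine ⟨phi2q b - μ * k22, -(phi1q b - μ * k21), ?_, by rw [h.1, h.2]; ring, by ring⟩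
          rintro ⟨e1, e2⟩
          exact h' ⟨neg_eq_zero.mp e2, e1⟩
      · refine ⟨phi2 b - μ * k12, -(phi1 b - μ * k11), ?_, by ring, by linear_combination -hdet⟩
        rintro ⟨e1, e2⟩
        exact h ⟨neg_eq_zero.mp e2, e1⟩
    obtain ⟨c1, c2, hne, R1, R2⟩ := hker
    refine ⟨fun x => c1 * phi1 x + c2 * phi2 x, fun x => c1 * phi1q x + c2 * phi2q x,
      slc_comb hab hp hq hr hs c1 c2 h1 h2, ?_, ?_, ?_⟩
    · refine ⟨a, hamem, ?_⟩
      rcases not_and_or.mp hne with h | h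
      · exact Or.inl (by simp only [hinit.1, hinit.2.2.1]; simpa using h)
      · exact Or.inr (by simp only [hinit.2.1, hinit.2.2.2]; simpa using h)
    · simp only [hinit.1, hinit.2.1, hinit.2.2.1, hinit.2.2.2]
      linear_combination R1
    · simp only [hinit.1, hinit.2.1, hinit.2.2.1, hinit.2.2.2]
      linear_combination R2

end SLC

/-- Characterization of the eigenvalues of the coupled self-adjoint boundary
conditions via the discriminant `D(λ) = trace (K⁻¹ Φ(b,λ))`, `K ∈ SL(2,ℝ)`:
`λ` is an eigenvalue of `Y(b) = e^{iγ} K Y(a)` (for `γ ∈ (−π,0) ∪ (0,π)`) iff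
`D(λ) = 2 cos γ`, and `λ` is an eigenvalue of `Y(b) = K Y(a)` iff `D(λ) = 2`.
Here `φ₁, φ₂` are the fundamental solutions with `φ₁(a) = φ₂¹(a) = 1`,
`φ₂(a) = φ₁¹(a) = 0`. -/
theorem stmt18 (a b : ℝ) (hab : a < b) (p q r s : ℝ → ℝ)
    (hp : IntegrableOn (fun x => 1 / p x) (Set.Ioo a b))
    (hq : IntegrableOn q (Set.Ioo a b))
    (hr : IntegrableOn r (Set.Ioo a b))
    (hs : IntegrableOn s (Set.Ioo a b))
    (hppos : ∀ᵐ x ∂(volume.restrict (Set.Ioo a b)), 0 < p x)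
    (hrpos : ∀ᵐ x ∂(volume.restrict (Set.Ioo a b)), 0 < r x)
    (lam : ℂ)
    (phi1 phi1q phi2 phi2q : ℝ → ℂ)
    (h1 : SLCSolution a b lam p q r s phi1 phi1q)
    (h2 : SLCSolution a b lam p q r s phi2 phi2q)
    (hinit : phi1 a = 1 ∧ phi1q a = 0 ∧ phi2 a = 0 ∧ phi2q a = 1)
    (k11 k12 k21 k22 : ℝ) (hdetK : k11 * k22 - k12 * k21 = 1)
    (D : ℂ)
    (hD : D = (k22 : ℂ) * phi1 b - (k12 : ℂ) * phi1q b
      - (k21 : ℂ) * phi2 b + (k11 : ℂ) * phi2q b) :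
    (∀ γ : ℝ, γ ∈ Set.Ioo (-Real.pi) 0 ∪ Set.Ioo 0 Real.pi →
      ((∃ y y1 : ℝ → ℂ, SLCSolution a b lam p q r s y y1 ∧
          (∃ x ∈ Set.Icc a b, y x ≠ 0 ∨ y1 x ≠ 0) ∧
          y b = Complex.exp (γ * Complex.I) * ((k11 : ℂ) * y a + (k12 : ℂ) * y1 a) ∧
          y1 b = Complex.exp (γ * Complex.I) * ((k21 : ℂ) * y a + (k22 : ℂ) * y1 a)) ↔
        D = 2 * Real.cos γ)) ∧
    ((∃ y y1 : ℝ → ℂ, SLCSolution a b lam p q r s y y1 ∧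
        (∃ x ∈ Set.Icc a b, y x ≠ 0 ∨ y1 x ≠ 0) ∧
        y b = (k11 : ℂ) * y a + (k12 : ℂ) * y1 a ∧
        y1 b = (k21 : ℂ) * y a + (k22 : ℂ) * y1 a) ↔
      D = 2) := by
  have hab' : a ≤ b := hab.le
  have hp' : IntegrableOn (fun x => 1 / p x) (Set.Ioc a b) := by
    rwa [IntegrableOn, Measure.restrict_congr_set Ioo_ae_eq_Ioc] at hp
  have hq' : IntegrableOn q (Set.Ioc a b) := by
    rwa [IntegrableOn, Measure.restrict_congr_set Ioo_ae_eq_Ioc] at hq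
  have hr' : IntegrableOn r (Set.Ioc a b) := by
    rwa [IntegrableOn, Measure.restrict_congr_set Ioo_ae_eq_Ioc] at hr
  have hs' : IntegrableOn s (Set.Ioc a b) := by
    rwa [IntegrableOn, Measure.restrict_congr_set Ioo_ae_eq_Ioc] at hs
  constructor
  · intro γ _
    have hμ : Complex.exp ((γ : ℂ) * Complex.I) ≠ 0 := Complex.exp_ne_zero _
    have H := slc_eig_iff hab' hp' hq' hr' hs' h1 h2 hinit k11 k12 k21 k22 hdetK D hD
      (Complex.exp ((γ : ℂ) * Complex.I)) hμ
    refine H.trans ?_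
    set μ := Complex.exp ((γ : ℂ) * Complex.I) with hμdef
    have hc := Complex.two_cos (x := (γ : ℂ))
    have hinv : μ * Complex.exp (-(γ : ℂ) * Complex.I) = 1 := by
      rw [hμdef, ← Complex.exp_add]
      have : (γ : ℂ) * Complex.I + -(γ : ℂ) * Complex.I = 0 := by ring
      rw [this, Complex.exp_zero]
    have key : μ * (2 * ((Real.cos γ : ℝ) : ℂ)) = 1 + μ ^ 2 := by
      rw [Complex.ofReal_cos]
      linear_combination μ * hc + hinv
    constructor
    · intro h
      refine mul_left_cancel₀ hμ ?_
      rw [h, key]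
    · intro h
      rw [h]
      exact key
  · have H := slc_eig_iff hab' hp' hq' hr' hs' h1 h2 hinit k11 k12 k21 k22 hdetK D hD
      1 one_ne_zero
    simp only [one_mul, one_pow] at H
    exact H.trans (by norm_num)
end
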